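/- arXiv:2108.02004 — 12 statements merged into one kernel-verified Lean document; each statement's English description precedes it below -/
import Mathlib

section
/- Every prime number p with p ≥ 281 belongs to the set A = {10a + 11b : a ≥ 1, b ≥ 2a+1, gcd(a,b) = 1}. -/
def A : Set ℕ := {n | ∃ a b : ℕ, n = 10 * a + 11 * b ∧ 1 ≤ a ∧ 2 * a + 1 ≤ b ∧ Nat.gcd a b = 1}

theorem stmt_0 (p : ℕ) (hp : p.Prime) (h : 281 ≤ p) : p ∈ A := by
  by_cases h331 : 331 ≤ p
  · have h11 : p % 11 ≠ 0 := by
      intro h0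
      have hd : (11 : ℕ) ∣ p := Nat.dvd_of_mod_eq_zero h0
      rcases hp.eq_one_or_self_of_dvd 11 hd with h1 | h1 <;> omega
    have hmd : p % 11 + 11 * (p / 11) = p := Nat.mod_add_div p 11
    have hlt : p % 11 < 11 := Nat.mod_lt _ (by norm_num)
    refine ⟨11 - p % 11, p / 11 + p % 11 - 10, by omega, by omega, by omega, ?_⟩
    set a := 11 - p % 11 with ha
    set b := p / 11 + p % 11 - 10 with hb
    have hdvd : Nat.gcd a b ∣ p := by
      have hd : Nat.gcd a b ∣ 10 * a + 11 * b :=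
        Dvd.dvd.add (Dvd.dvd.mul_left (Nat.gcd_dvd_left a b) 10)
          (Dvd.dvd.mul_left (Nat.gcd_dvd_right a b) 11)
      have hp' : 10 * a + 11 * b = p := by omega
      rwa [hp'] at hd
    rcases hp.eq_one_or_self_of_dvd _ hdvd with h1 | h1
    · exact h1
    · exfalso
      have hle : Nat.gcd a b ≤ a := Nat.le_of_dvd (by omega) (Nat.gcd_dvd_left a b)
      omega
  · interval_cases p <;>
      (first
        | exact ⟨5, 21, by decide⟩
        | exact ⟨3, 23, by decide⟩
        | exact ⟨4, 23, by decide⟩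
        | exact ⟨1, 27, by decide⟩
        | exact ⟨8, 21, by decide⟩
        | exact ⟨6, 23, by decide⟩
        | exact ⟨2, 27, by decide⟩
        | exact absurd hp (by norm_num))
end

section
/- 1674 is the greatest natural number not belonging to A: that is, 1674 ∉ A and for all n > 1674, n ∈ A, where A = {10a + 11b : a ≥ 1, b ≥ 2a+1, gcd(a,b) = 1}. -/
lemma core (S B : Finset ℕ) (hS : ∀ p ∈ S, Nat.Prime p)
    (hBp : ∀ p ∈ B, Nat.Prime p ∧ 5 ≤ p ∧ p ≠ 11)
    (hd : ∀ p ∈ B, p ∉ S) (h11S : 11 ∉ S) (hcard : B.card ≤ 4)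
    (c : ℕ) (hc1 : 1 ≤ c) (hc2 : c ≤ 10) :
    ∃ x, 1 ≤ x ∧ x < 55 * ∏ p ∈ S, p ∧ x % 11 = c ∧
      (∀ p ∈ S, x % p = 1) ∧ (∀ p ∈ B, ¬ p ∣ x) := by
  classical
  set P := ∏ p ∈ S, p with hPdef
  have hP0 : P ≠ 0 := by
    refine Finset.prod_ne_zero_iff.mpr ?_
    exact fun p hp => (hS p hp).pos.ne'
  have hcop : Nat.Coprime 11 P := by
    refine Nat.Coprime.prod_right ?_
    intro p hp
    exact (Nat.coprime_primes (by norm_num) (hS p hp)).mpr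
      (fun h => h11S (h ▸ hp))
  set x₀ := (Nat.chineseRemainder hcop c 1 : ℕ) with hx₀def
  have hx₀lt : x₀ < 11 * P := by
    rw [hx₀def]; exact Nat.chineseRemainder_lt_mul hcop c 1 (by norm_num) hP0
  have hcrt1 : x₀ % 11 = c % 11 := (Nat.chineseRemainder hcop c 1).2.1
  have hcrt2 : x₀ % P = 1 % P := (Nat.chineseRemainder hcop c 1).2.2
  have key : ∀ p ∈ B, ∀ j j', j < j' → j' < 5 → p ∣ (x₀ + 11 * P * j) →
      p ∣ (x₀ + 11 * P * j') → False := by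
    intro p hpB j j' hlt hj5 h1 h2
    obtain ⟨hpp, hp5, hp11⟩ := hBp p hpB
    have hdiff : p ∣ 11 * P * (j' - j) := by
      have hsub := Nat.dvd_sub h2 h1
      have heq2 : x₀ + 11 * P * j' - (x₀ + 11 * P * j) = 11 * P * (j' - j) := by
        rw [Nat.add_sub_add_left, ← Nat.mul_sub]
      rwa [heq2] at hsub
    rcases (Nat.Prime.dvd_mul hpp).mp hdiff with h | h
    · rcases (Nat.Prime.dvd_mul hpp).mp h with h' | h'
      · exact hp11 ((Nat.prime_dvd_prime_iff_eq hpp (by norm_num)).mp h')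
      · obtain ⟨q, hqS, hpq⟩ := (hpp.prime.dvd_finset_prod_iff _).mp h'
        have : p = q := (Nat.prime_dvd_prime_iff_eq hpp (hS q hqS)).mp hpq
        exact hd p hpB (this ▸ hqS)
    · have h1' : 0 < j' - j := by omega
      have := Nat.le_of_dvd h1' h
      omega
  have hgood : ∃ j < 5, ∀ p ∈ B, ¬ p ∣ (x₀ + 11 * P * j) := by
    by_contra hbad
    push_neg at hbad
    have hbad' : ∀ j : ℕ, ∃ p : ℕ, j ∈ Finset.range 5 → (p ∈ B ∧ p ∣ (x₀ + 11 * P * j)) := by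
      intro j
      by_cases hj : j ∈ Finset.range 5
      · obtain ⟨p, hp1, hp2⟩ := hbad j (Finset.mem_range.mp hj)
        exact ⟨p, fun _ => ⟨hp1, hp2⟩⟩
      · exact ⟨0, fun h => absurd h hj⟩
    choose f hf using hbad'
    obtain ⟨j, hj, j', hj', hne, heq⟩ :=
      Finset.exists_ne_map_eq_of_card_lt_of_maps_to
        (s := Finset.range 5) (t := B)
        (by simpa using lt_of_le_of_lt hcard (by norm_num))
        (fun j hj => (hf j hj).1)
    rcases Nat.lt_or_ge j j' with hlt | hge
    · exact key (f j) (hf j hj).1 j j' hlt (Finset.mem_range.mp hj') (hf j hj).2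
        (heq ▸ (hf j' hj').2)
    · have hlt : j' < j := by omega
      exact key (f j) (hf j hj).1 j' j hlt (Finset.mem_range.mp hj) (heq ▸ (hf j' hj').2)
        (hf j hj).2
  obtain ⟨j, hj5, hjgood⟩ := hgood
  have hmod : (x₀ + 11 * P * j) % 11 = c := by
    rw [mul_assoc, Nat.add_mul_mod_self_left]
    omega
  refine ⟨x₀ + 11 * P * j, by omega, ?_, hmod, ?_, hjgood⟩
  · have hP1 : 1 ≤ P := Nat.pos_of_ne_zero hP0
    nlinarith [hx₀lt, hj5, hP1]
  · intro p hpS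
    have hp2 : 2 ≤ p := (hS p hpS).two_le
    obtain ⟨t, ht⟩ := Finset.dvd_prod_of_mem (fun p => p) hpS
    have ht' : P = p * t := by rw [hPdef]; exact ht
    have h3 : x₀ + 11 * P * j = x₀ + p * (11 * t * j) := by rw [ht']; ring
    rw [h3, Nat.add_mul_mod_self_left]
    have h5 : x₀ % p = 1 % p := by
      have h7 : x₀ ≡ 1 [MOD p] := Nat.ModEq.of_dvd ⟨t, ht'⟩ hcrt2
      exact h7
    have h6 : 1 % p = 1 := Nat.one_mod_eq_one.mpr (by omega)
    exact h5.trans h6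

lemma exist_gen (n : ℕ) (hn : 10539 ≤ n) (c : ℕ) (hc1 : 1 ≤ c) (hc2 : c ≤ 10) :
    ∃ x, 1 ≤ x ∧ 32 * x + 11 ≤ n ∧ x % 11 = c ∧ Nat.gcd x n = 1 := by
  classical
  have hn0 : n ≠ 0 := by omega
  set D := n.primeFactors with hD
  set D' := (D.filter (fun p => 5 ≤ p)).erase 11 with hD'
  obtain ⟨B, hBD', hBcard, hBbig, hBsmall⟩ :
      ∃ B, B ⊆ D' ∧ B.card ≤ 4 ∧ (4 ≤ D'.card → B.card = 4) ∧ (D'.card < 4 → B = D') := by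
    by_cases h4 : 4 ≤ D'.card
    · obtain ⟨B, h1, h2⟩ := Finset.exists_subset_card_eq h4
      exact ⟨B, h1, by omega, fun _ => h2, fun h => by omega⟩
    · exact ⟨D', Finset.Subset.refl _, by omega, fun h => absurd h h4, fun _ => rfl⟩
  have hBprime : ∀ p ∈ B, Nat.Prime p := fun p hp =>
    Nat.prime_of_mem_primeFactors (Finset.mem_filter.mp (Finset.mem_of_mem_erase (hBD' hp))).1
  have hB5 : ∀ p ∈ B, 5 ≤ p := fun p hp =>
    (Finset.mem_filter.mp (Finset.mem_of_mem_erase (hBD' hp))).2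
  have hB11 : ∀ p ∈ B, p ≠ 11 := fun p hp => Finset.ne_of_mem_erase (hBD' hp)
  have hBD : B ⊆ D := fun p hp => (Finset.mem_filter.mp (Finset.mem_of_mem_erase (hBD' hp))).1
  set S := (D \ B).erase 11 with hSdef
  have hSsub : S ⊆ D := (Finset.erase_subset _ _).trans Finset.sdiff_subset
  have hSprime : ∀ p ∈ S, Nat.Prime p := fun p hp => Nat.prime_of_mem_primeFactors (hSsub hp)
  have hSnotB : ∀ p ∈ S, p ∉ B := fun p hp =>
    (Finset.mem_sdiff.mp (Finset.mem_of_mem_erase hp)).2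
  obtain ⟨x, hx1, hxlt, hxmod, hxS, hxB⟩ :=
    core S B hSprime (fun p hp => ⟨hBprime p hp, hB5 p hp, hB11 p hp⟩)
      (fun p hpB hpS => hSnotB p hpS hpB)
      (Finset.notMem_erase _ _) hBcard c hc1 hc2
  have hgcd : Nat.gcd x n = 1 := by
    by_contra hg
    have hq := Nat.minFac_prime hg
    set q := (Nat.gcd x n).minFac with hqdef
    have hqx : q ∣ x := (Nat.minFac_dvd _).trans (Nat.gcd_dvd_left _ _)
    have hqn : q ∣ n := (Nat.minFac_dvd _).trans (Nat.gcd_dvd_right _ _)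
    have hqD : q ∈ D := by rw [hD]; exact Nat.mem_primeFactors.mpr ⟨hq, hqn, hn0⟩
    by_cases hqB : q ∈ B
    · exact hxB q hqB hqx
    · by_cases hq11 : q = 11
      · rw [hq11] at hqx
        omega
      · have hqS : q ∈ S := Finset.mem_erase.mpr ⟨hq11, Finset.mem_sdiff.mpr ⟨hqD, hqB⟩⟩
        have h1 := hxS q hqS
        have h0 : x % q = 0 := Nat.mod_eq_zero_of_dvd hqx
        omega
  refine ⟨x, hx1, ?_, hxmod, hgcd⟩
  -- size bound
  have hP1 : 1 ≤ ∏ p ∈ S, p := by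
    refine Nat.pos_of_ne_zero (Finset.prod_ne_zero_iff.mpr ?_)
    exact fun p hp => (hSprime p hp).pos.ne'
  by_cases h4 : 4 ≤ D'.card
  · -- big case : 4225 * P ≤ n
    have hB4 : B.card = 4 := hBbig h4
    set Q := ∏ p ∈ B, p with hQdef
    have hsplit : (∏ p ∈ B.filter (fun p => 13 ≤ p), p) *
        (∏ p ∈ B.filter (fun p => ¬ 13 ≤ p), p) = Q :=
      Finset.prod_filter_mul_prod_filter_not B _ _
    have hsc : B.filter (fun p => ¬ 13 ≤ p) ⊆ ({5, 7} : Finset ℕ) := by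
      intro p hp
      obtain ⟨hpB, hpn13⟩ := Finset.mem_filter.mp hp
      have hp5 := hB5 p hpB
      have hp11 := hB11 p hpB
      have hpp := hBprime p hpB
      have hple : p ≤ 12 := by omega
      simp only [Finset.mem_insert, Finset.mem_singleton]
      interval_cases p <;> revert hpp hp11 <;> decide
    have hsccard : (B.filter (fun p => ¬ 13 ≤ p)).card ≤ 2 := by
      have := Finset.card_le_card hsc
      simpa using this
    have hcards : (B.filter (fun p => 13 ≤ p)).card +
        (B.filter (fun p => ¬ 13 ≤ p)).card = 4 := by
      rw [Finset.card_filter_add_card_filter_not, hB4]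
    have hprodbig : 13 ^ (B.filter (fun p => 13 ≤ p)).card ≤
        ∏ p ∈ B.filter (fun p => 13 ≤ p), p := by
      refine Finset.pow_card_le_prod _ _ _ ?_
      intro p hp
      exact (Finset.mem_filter.mp hp).2
    have hprodsmall : 5 ^ (B.filter (fun p => ¬ 13 ≤ p)).card ≤
        ∏ p ∈ B.filter (fun p => ¬ 13 ≤ p), p := by
      refine Finset.pow_card_le_prod _ _ _ ?_
      intro p hp
      exact hB5 p (Finset.mem_filter.mp hp).1
    have hQ4225 : 4225 ≤ Q := by
      rw [← hsplit]
      have h1 : 13 ^ (B.filter (fun p => 13 ≤ p)).card *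
          5 ^ (B.filter (fun p => ¬ 13 ≤ p)).card ≤
          (∏ p ∈ B.filter (fun p => 13 ≤ p), p) *
          (∏ p ∈ B.filter (fun p => ¬ 13 ≤ p), p) :=
        Nat.mul_le_mul hprodbig hprodsmall
      refine le_trans ?_ h1
      have hkey : ∀ bc sc : ℕ, bc + sc = 4 → sc ≤ 2 → (4225:ℕ) ≤ 13 ^ bc * 5 ^ sc := by
        intro bc sc h1 h2
        rcases (by omega : sc = 0 ∨ sc = 1 ∨ sc = 2) with h|h|h <;> subst h
        · have hb : bc = 4 := by omega
          subst hb; norm_num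
        · have hb : bc = 3 := by omega
          subst hb; norm_num
        · have hb : bc = 2 := by omega
          subst hb; norm_num
      exact hkey _ _ hcards hsccard
    have hdisj : Disjoint S B := Finset.disjoint_left.mpr hSnotB
    have hunion : S ∪ B ⊆ D := Finset.union_subset hSsub hBD
    have hprodeq : (∏ p ∈ S, p) * Q = ∏ p ∈ S ∪ B, p := by
      rw [hQdef, ← Finset.prod_union hdisj]
    have hdvd : (∏ p ∈ S ∪ B, p) ∣ n :=
      dvd_trans (Finset.prod_dvd_prod_of_subset _ _ _ hunion) (Nat.prod_primeFactors_dvd n)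
    have hle : (∏ p ∈ S, p) * Q ≤ n := by
      rw [hprodeq]
      exact Nat.le_of_dvd (by omega) hdvd
    have h4225 : 4225 * (∏ p ∈ S, p) ≤ n := by
      calc 4225 * (∏ p ∈ S, p) ≤ Q * (∏ p ∈ S, p) := Nat.mul_le_mul_right _ hQ4225
        _ = (∏ p ∈ S, p) * Q := Nat.mul_comm _ _
        _ ≤ n := hle
    omega
  · -- small case : P ≤ 6
    have hBD'' : B = D' := hBsmall (by omega)
    have hS23 : S ⊆ ({2, 3} : Finset ℕ) := by
      intro p hp
      have hpD : p ∈ D := hSsub hp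
      have hpp := Nat.prime_of_mem_primeFactors hpD
      have hpnB : p ∉ B := hSnotB p hp
      have hp11 : p ≠ 11 := Finset.ne_of_mem_erase hp
      have hpn5 : ¬ 5 ≤ p := by
        intro h5
        exact hpnB (hBD'' ▸ Finset.mem_erase.mpr ⟨hp11, Finset.mem_filter.mpr ⟨hpD, h5⟩⟩)
      have hp2 := hpp.two_le
      simp only [Finset.mem_insert, Finset.mem_singleton]
      interval_cases p <;> revert hpp <;> decide
    have hPdvd : (∏ p ∈ S, p) ∣ 6 := by
      have := Finset.prod_dvd_prod_of_subset S ({2,3} : Finset ℕ) (fun p => p) hS23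
      simpa using this
    have hP6 : (∏ p ∈ S, p) ≤ 6 := Nat.le_of_dvd (by norm_num) hPdvd
    omega

lemma memA_main (n a : ℕ) (ha1 : 1 ≤ a) (ha2 : 32 * a + 11 ≤ n)
    (ha3 : (a + n) % 11 = 0) (ha4 : Nat.gcd a n = 1) : n ∈ A := by
  obtain ⟨k, hk⟩ : 11 ∣ (a + n) := Nat.dvd_of_mod_eq_zero ha3
  refine ⟨a, k - a, by omega, ha1, by omega, ?_⟩
  have h1 : Nat.gcd a (k - a) ∣ a := Nat.gcd_dvd_left _ _
  have h2 : Nat.gcd a (k - a) ∣ (k - a) := Nat.gcd_dvd_right _ _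
  have h3 : Nat.gcd a (k - a) ∣ n := by
    have hh : n = 10 * a + 11 * (k - a) := by omega
    rw [hh]
    exact Nat.dvd_add (Dvd.dvd.mul_left h1 10) (Dvd.dvd.mul_left h2 11)
  have hdvd : Nat.gcd a (k - a) ∣ 1 := ha4 ▸ Nat.dvd_gcd h1 h3
  exact Nat.dvd_one.mp hdvd

lemma memA_mu (μ a : ℕ) (h1 : 1 ≤ a) (h2 : 32 * a + 11 ≤ μ)
    (h3 : (μ + a) % 11 ≠ 0) (h4 : Nat.gcd a μ = 1) : 11 * μ ∈ A := by
  refine ⟨11 * a, μ - 10 * a, by omega, by omega, by omega, ?_⟩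
  by_contra hg
  have hq := Nat.minFac_prime hg
  set q := (Nat.gcd (11 * a) (μ - 10 * a)).minFac with hqdef
  have hqa : q ∣ 11 * a := (Nat.minFac_dvd _).trans (Nat.gcd_dvd_left _ _)
  have hqb : q ∣ (μ - 10 * a) := (Nat.minFac_dvd _).trans (Nat.gcd_dvd_right _ _)
  rcases (Nat.Prime.dvd_mul hq).mp hqa with h | h
  · have hq11 : q = 11 := (Nat.prime_dvd_prime_iff_eq hq (by norm_num)).mp h
    rw [hq11] at hqb
    omega
  · have hqμ : q ∣ μ := by
      have hh : μ = (μ - 10 * a) + 10 * a := by omega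
      rw [hh]
      exact Nat.dvd_add hqb (Dvd.dvd.mul_left h 10)
    have : q ∣ 1 := h4 ▸ Nat.dvd_gcd h hqμ
    exact hq.one_lt.ne' (Nat.dvd_one.mp this)

def chkA (n : ℕ) : Bool :=
  n % 11 == 0 ||
  (List.range 12).any (fun k =>
    decide (32 * ((11 - n % 11) + 11 * k) + 11 ≤ n) &&
    (Nat.gcd ((11 - n % 11) + 11 * k) n == 1))

def chkB (m : ℕ) : Bool :=
  (List.range 36).any (fun a =>
    decide (32 * a + 11 ≤ m) && ((m + a) % 11 != 0) && (Nat.gcd a m == 1))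

lemma chkA_sound (n : ℕ) (h11 : ¬ 11 ∣ n) (h : chkA n = true) :
    ∃ a, 1 ≤ a ∧ 32 * a + 11 ≤ n ∧ (a + n) % 11 = 0 ∧ Nat.gcd a n = 1 := by
  unfold chkA at h
  rw [Bool.or_eq_true] at h
  rcases h with h | h
  · exact absurd (Nat.dvd_of_mod_eq_zero (by simpa using h)) h11
  · rw [List.any_eq_true] at h
    obtain ⟨k, hk, hcond⟩ := h
    rw [Bool.and_eq_true, decide_eq_true_eq, beq_iff_eq] at hcond
    obtain ⟨hsize, hgcd⟩ := hcond
    refine ⟨(11 - n % 11) + 11 * k, by omega, hsize, ?_, hgcd⟩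
    have hne : n % 11 ≠ 0 := fun hh => h11 (Nat.dvd_of_mod_eq_zero hh)
    omega

lemma chkB_sound (m : ℕ) (h : chkB m = true) :
    ∃ a, 1 ≤ a ∧ 32 * a + 11 ≤ m ∧ (m + a) % 11 ≠ 0 ∧ Nat.gcd a m = 1 := by
  unfold chkB at h
  rw [List.any_eq_true] at h
  obtain ⟨a, ha, hcond⟩ := h
  simp only [Bool.and_eq_true, decide_eq_true_eq, beq_iff_eq, bne_iff_ne, ne_eq] at hcond
  obtain ⟨⟨hsize, hmod⟩, hgcd⟩ := hcond
  have ha1 : 1 ≤ a := by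
    rcases Nat.eq_zero_or_pos a with h0 | h0
    · subst h0
      rw [Nat.gcd_zero_left] at hgcd
      omega
    · exact h0
  exact ⟨a, ha1, hsize, hmod, hgcd⟩
set_option maxRecDepth 100000 in
lemma zoneA0 : ∀ i < 1000, chkA (1675 + i) = true := by decide
set_option maxRecDepth 100000 in
lemma zoneA1 : ∀ i < 1000, chkA (2675 + i) = true := by decide
set_option maxRecDepth 100000 in
lemma zoneA2 : ∀ i < 1000, chkA (3675 + i) = true := by decide
set_option maxRecDepth 100000 in
lemma zoneA3 : ∀ i < 1000, chkA (4675 + i) = true := by decide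
set_option maxRecDepth 100000 in
lemma zoneA4 : ∀ i < 1000, chkA (5675 + i) = true := by decide
set_option maxRecDepth 100000 in
lemma zoneA5 : ∀ i < 1000, chkA (6675 + i) = true := by decide
set_option maxRecDepth 100000 in
lemma zoneA6 : ∀ i < 1000, chkA (7675 + i) = true := by decide
set_option maxRecDepth 100000 in
lemma zoneA7 : ∀ i < 1000, chkA (8675 + i) = true := by decide
set_option maxRecDepth 100000 in
lemma zoneA8 : ∀ i < 1000, chkA (9675 + i) = true := by decide
set_option maxRecDepth 100000 in
lemma zoneB0 : ∀ i < 1000, chkB (153 + i) = true := by decide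
set_option maxRecDepth 100000 in
lemma zoneB1 : ∀ i < 1000, chkB (1153 + i) = true := by decide
set_option maxRecDepth 100000 in
lemma zoneB2 : ∀ i < 1000, chkB (2153 + i) = true := by decide
set_option maxRecDepth 100000 in
lemma zoneB3 : ∀ i < 1000, chkB (3153 + i) = true := by decide
set_option maxRecDepth 100000 in
lemma zoneB4 : ∀ i < 1000, chkB (4153 + i) = true := by decide
set_option maxRecDepth 100000 in
lemma zoneB5 : ∀ i < 1000, chkB (5153 + i) = true := by decide
set_option maxRecDepth 100000 in
lemma zoneB6 : ∀ i < 1000, chkB (6153 + i) = true := by decide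
set_option maxRecDepth 100000 in
lemma zoneB7 : ∀ i < 1000, chkB (7153 + i) = true := by decide
set_option maxRecDepth 100000 in
lemma zoneB8 : ∀ i < 1000, chkB (8153 + i) = true := by decide
set_option maxRecDepth 100000 in
lemma zoneB9 : ∀ i < 1000, chkB (9153 + i) = true := by decide
set_option maxRecDepth 100000 in
lemma zoneB10 : ∀ i < 1000, chkB (10153 + i) = true := by decide

lemma zoneA_all (n : ℕ) (h1 : 1675 ≤ n) (h2 : n ≤ 10538) : chkA n = true := by
  have get : ∀ s : ℕ, (∀ i < 1000, chkA (s + i) = true) → s ≤ n → n < s + 1000 → chkA n = true := by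
    intro s hs hsn hns
    have h := hs (n - s) (by omega)
    rwa [show s + (n - s) = n by omega] at h
  by_cases hc0 : n < 2675
  · exact get 1675 zoneA0 (by omega) hc0
  by_cases hc1 : n < 3675
  · exact get 2675 zoneA1 (by omega) hc1
  by_cases hc2 : n < 4675
  · exact get 3675 zoneA2 (by omega) hc2
  by_cases hc3 : n < 5675
  · exact get 4675 zoneA3 (by omega) hc3
  by_cases hc4 : n < 6675
  · exact get 5675 zoneA4 (by omega) hc4
  by_cases hc5 : n < 7675
  · exact get 6675 zoneA5 (by omega) hc5
  by_cases hc6 : n < 8675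
  · exact get 7675 zoneA6 (by omega) hc6
  by_cases hc7 : n < 9675
  · exact get 8675 zoneA7 (by omega) hc7
  by_cases hc8 : n < 10675
  · exact get 9675 zoneA8 (by omega) hc8
  omega

lemma zoneB_all (m : ℕ) (h1 : 153 ≤ m) (h2 : m ≤ 10538) : chkB m = true := by
  have get : ∀ s : ℕ, (∀ i < 1000, chkB (s + i) = true) → s ≤ m → m < s + 1000 → chkB m = true := by
    intro s hs hsn hns
    have h := hs (m - s) (by omega)
    rwa [show s + (m - s) = m by omega] at h
  by_cases hc0 : m < 1153
  · exact get 153 zoneB0 (by omega) hc0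
  by_cases hc1 : m < 2153
  · exact get 1153 zoneB1 (by omega) hc1
  by_cases hc2 : m < 3153
  · exact get 2153 zoneB2 (by omega) hc2
  by_cases hc3 : m < 4153
  · exact get 3153 zoneB3 (by omega) hc3
  by_cases hc4 : m < 5153
  · exact get 4153 zoneB4 (by omega) hc4
  by_cases hc5 : m < 6153
  · exact get 5153 zoneB5 (by omega) hc5
  by_cases hc6 : m < 7153
  · exact get 6153 zoneB6 (by omega) hc6
  by_cases hc7 : m < 8153
  · exact get 7153 zoneB7 (by omega) hc7
  by_cases hc8 : m < 9153
  · exact get 8153 zoneB8 (by omega) hc8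
  by_cases hc9 : m < 10153
  · exact get 9153 zoneB9 (by omega) hc9
  by_cases hc10 : m < 11153
  · exact get 10153 zoneB10 (by omega) hc10
  omega

lemma not1674 : 1674 ∉ A := by
  rintro ⟨a, b, heq, ha, hb, hg⟩
  have hcases : a = 9 ∨ a = 20 ∨ a = 31 ∨ a = 42 := by omega
  rcases hcases with h|h|h|h
  · subst h
    have hb' : b = 144 := by omega
    subst hb'
    exact absurd hg (by decide)
  · subst h
    have hb' : b = 134 := by omega
    subst hb'
    exact absurd hg (by decide)
  · subst h
    have hb' : b = 124 := by omega
    subst hb'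
    exact absurd hg (by decide)
  · subst h
    have hb' : b = 114 := by omega
    subst hb'
    exact absurd hg (by decide)

theorem stmt_3 : 1674 ∉ A ∧ ∀ n : ℕ, 1674 < n → n ∈ A := by
  refine ⟨not1674, ?_⟩
  intro n hn
  by_cases h11 : 11 ∣ n
  · obtain ⟨μ, rfl⟩ := h11
    have hμ1 : 153 ≤ μ := by omega
    by_cases hμ : μ ≤ 10538
    · obtain ⟨a, ha1, ha2, ha3, ha4⟩ := chkB_sound μ (zoneB_all μ hμ1 hμ)
      exact memA_mu μ a ha1 ha2 ha3 ha4
    · set c : ℕ := if (μ + 1) % 11 = 0 then 2 else 1 with hcdef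
      have hc1 : 1 ≤ c := by rw [hcdef]; split <;> omega
      have hc2 : c ≤ 10 := by rw [hcdef]; split <;> omega
      have hcmod : (μ + c) % 11 ≠ 0 := by
        rw [hcdef]
        split
        · omega
        · omega
      obtain ⟨x, hx1, hx2, hx3, hx4⟩ := exist_gen μ (by omega) c hc1 hc2
      refine memA_mu μ x hx1 hx2 (by omega) hx4
  · have hne : n % 11 ≠ 0 := fun hh => h11 (Nat.dvd_of_mod_eq_zero hh)
    by_cases hsm : n ≤ 10538
    · obtain ⟨a, ha1, ha2, ha3, ha4⟩ := chkA_sound n h11 (zoneA_all n (by omega) hsm)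
      exact memA_main n a ha1 ha2 ha3 ha4
    · obtain ⟨x, hx1, hx2, hx3, hx4⟩ := exist_gen n (by omega) (11 - n % 11) (by omega) (by omega)
      exact memA_main n x hx1 hx2 (by omega) hx4
end

section
/- The complement in ℕ of the set A = {10a + 11b : a ≥ 1, b ≥ 2a+1, gcd(a,b) = 1} is finite (equivalently, A has bounded gaps: there exists M such that every n > M lies in A). -/
lemma mem_A_of (n a : ℕ) (ha : 1 ≤ a) (hsize : 32 * a + 11 ≤ n)
    (hdvd : 11 ∣ n + a) (hcop : Nat.Coprime a n) : n ∈ A := by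
  obtain ⟨c, hc⟩ := hdvd
  -- b = (n - 10a)/11
  have hb : ∃ b, n = 10 * a + 11 * b ∧ 2 * a + 1 ≤ b := by
    refine ⟨c - a, by omega, by omega⟩
  obtain ⟨b, hnb, hble⟩ := hb
  refine ⟨a, b, hnb, ha, hble, ?_⟩
  have h1 : Nat.Coprime a (11 * b) := by
    have := hcop
    rw [hnb, show 10 * a + 11 * b = 11 * b + a * 10 by ring,
      Nat.coprime_add_mul_left_right] at this
    exact this
  exact h1.coprime_dvd_right (dvd_mul_left b 11)

lemma mem_A_of_dvd11 (n : ℕ) (hn : 3883 ≤ n) (h11 : 11 ∣ n) : n ∈ A := by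
  obtain ⟨m, hm⟩ := h11
  by_cases h121 : 11 ∣ m
  · -- a = 11, b = m - 10
    have hb : ¬ 11 ∣ (m - 10) := by omega
    have hcop : Nat.Coprime 11 (m - 10) :=
      (Nat.Prime.coprime_iff_not_dvd (by norm_num)).mpr hb
    exact ⟨11, m - 10, by omega, by norm_num, by omega, hcop⟩
  · -- a = 121, b = m - 110
    have hb : ¬ 11 ∣ (m - 110) := by omega
    have hcop : Nat.Coprime 121 (m - 110) := by
      have := (Nat.Prime.coprime_iff_not_dvd (p := 11) (by norm_num)).mpr hb
      exact (this.pow_left 2 : Nat.Coprime (11^2) (m-110))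
    exact ⟨121, m - 110, by omega, by norm_num, by omega, hcop⟩

lemma sieve (n : ℕ) (hn : 1000000 ≤ n) (h11 : ¬ (11 ∣ n)) :
    ∃ a, 1 ≤ a ∧ 32 * a + 11 ≤ n ∧ 11 ∣ n + a ∧ Nat.Coprime a n := by
  have hn0 : n ≠ 0 := by omega
  set ω := n.primeFactors.card with hω
  set small : Finset ℕ := n.primeFactors.filter (fun p => p ≤ ω + 1) with hsmall
  set M' : ℕ := ∏ p ∈ small, p with hM'
  have hsmallP : ∀ p ∈ small, Nat.Prime p := by
    intro p hp
    exact (Nat.mem_primeFactors.mp (Finset.mem_filter.mp hp).1).1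
  have hsmallDvd : ∀ p ∈ small, p ∣ M' := fun p hp => Finset.dvd_prod_of_mem _ hp
  have hM'pos : 1 ≤ M' := Finset.prod_pos (fun p hp => (hsmallP p hp).pos)
  have hne11 : ∀ p ∈ small, p ≠ 11 := by
    intro p hp hpe
    exact h11 (hpe ▸ (Nat.mem_primeFactors.mp (Finset.mem_filter.mp hp).1).2.1)
  have hco : Nat.Coprime 11 M' :=
    Nat.Coprime.prod_right (fun p hp =>
      (Nat.coprime_primes (by norm_num) (hsmallP p hp)).mpr (fun h => hne11 p hp h.symm))
  set r := 11 - n % 11 with hr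
  have hnmod : n % 11 ≠ 0 := fun h => h11 (Nat.dvd_of_mod_eq_zero h)
  have hr1 : 1 ≤ r ∧ r ≤ 10 := by omega
  set a₀ : ℕ := (Nat.chineseRemainder hco r 1).val with ha₀
  have hlt : a₀ < 11 * M' := Nat.chineseRemainder_lt_mul hco r 1 (by norm_num) (by omega)
  have hmod11 : a₀ % 11 = r := by
    have := (Nat.chineseRemainder hco r 1).2.1
    rw [Nat.ModEq] at this
    omega
  have hmodM' : a₀ % M' = 1 % M' := (Nat.chineseRemainder hco r 1).2.2
  have ha₀1 : 1 ≤ a₀ := by omega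
  -- bad set and big primes
  set big : Finset ℕ := n.primeFactors.filter (fun p => ¬ p ≤ ω + 1) with hbig
  set bad : Finset ℕ :=
    (Finset.range (ω + 1)).filter (fun t => ¬ Nat.Coprime (a₀ + 11 * M' * t) n) with hbad
  have hcard : small.card + big.card = ω :=
    Finset.card_filter_add_card_filter_not _
  -- each bad t maps to a big prime dividing a₀ + 11 M' t
  have key : ∀ t ∈ bad, (Nat.gcd (a₀ + 11 * M' * t) n).minFac ∈ big ∧
      (Nat.gcd (a₀ + 11 * M' * t) n).minFac ∣ (a₀ + 11 * M' * t) := by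
    intro t ht
    obtain ⟨htr, htc⟩ := Finset.mem_filter.mp ht
    set g := Nat.gcd (a₀ + 11 * M' * t) n with hg
    have hg1 : g ≠ 1 := htc
    set p := g.minFac with hp
    have hpp : p.Prime := Nat.minFac_prime hg1
    have hpg : p ∣ g := Nat.minFac_dvd g
    have hpa : p ∣ a₀ + 11 * M' * t := hpg.trans (Nat.gcd_dvd_left _ _)
    have hpn : p ∣ n := hpg.trans (Nat.gcd_dvd_right _ _)
    refine ⟨Finset.mem_filter.mpr ⟨Nat.mem_primeFactors.mpr ⟨hpp, hpn, hn0⟩, ?_⟩, hpa⟩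
    intro hple
    have hpsmall : p ∈ small := Finset.mem_filter.mpr
      ⟨Nat.mem_primeFactors.mpr ⟨hpp, hpn, hn0⟩, hple⟩
    have hpM : p ∣ M' := hsmallDvd p hpsmall
    have hpa₀ : p ∣ a₀ := by
      have : p ∣ 11 * M' * t := Dvd.dvd.mul_right (Dvd.dvd.mul_left hpM 11) t
      have := Nat.dvd_sub hpa this
      simpa using this
    have hmp : a₀ % p = 1 % p := Nat.ModEq.of_dvd hpM hmodM'
    have h0 : a₀ % p = 0 := Nat.mod_eq_zero_of_dvd hpa₀
    have h1 : 1 % p = 1 := Nat.mod_eq_of_lt hpp.one_lt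
    omega
  -- injectivity on bad
  have keylt : ∀ t t', t ∈ bad → t' ∈ bad → t < t' →
      (Nat.gcd (a₀ + 11 * M' * t) n).minFac ≠ (Nat.gcd (a₀ + 11 * M' * t') n).minFac := by
    intro t t' ht ht' hltt he
    set p := (Nat.gcd (a₀ + 11 * M' * t) n).minFac with hpdef
    obtain ⟨hpbig, hpa⟩ := key t ht
    obtain ⟨hpbig', hpa'⟩ := key t' ht'
    rw [← he] at hpa'
    obtain ⟨hpf, hple⟩ := Finset.mem_filter.mp hpbig
    obtain ⟨hpp, hpn, -⟩ := Nat.mem_primeFactors.mp hpf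
    obtain ⟨d, hd⟩ := Nat.exists_eq_add_of_lt hltt
    have hsplit : a₀ + 11 * M' * t' = (a₀ + 11 * M' * t) + 11 * M' * (d + 1) := by
      subst hd; ring
    have hpd : p ∣ 11 * M' * (d + 1) := by
      rw [hsplit] at hpa'
      exact (Nat.dvd_add_right hpa).mp hpa'
    rcases (Nat.Prime.dvd_mul hpp).mp hpd with hp1 | hp2
    · rcases (Nat.Prime.dvd_mul hpp).mp hp1 with hp3 | hp4
      · have : p = 11 := (Nat.prime_dvd_prime_iff_eq hpp (by norm_num)).mp hp3
        exact h11 (this ▸ hpn)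
      · obtain ⟨q, hq, hpq⟩ := (Nat.Prime.prime hpp).exists_mem_finset_dvd hp4
        have heq : p = q := (Nat.prime_dvd_prime_iff_eq hpp (hsmallP q hq)).mp hpq
        have hq2 : q ≤ ω + 1 := (Finset.mem_filter.mp hq).2
        omega
    · have hd1 : d + 1 ≤ ω := by
        have := (Finset.mem_filter.mp ht').1
        have := Finset.mem_range.mp this
        omega
      have := Nat.le_of_dvd (by omega) hp2
      omega
  have hinj : Set.InjOn (fun t => (Nat.gcd (a₀ + 11 * M' * t) n).minFac) ↑bad := by
    intro t ht t' ht' he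
    by_contra hne
    rcases Nat.lt_or_ge t t' with h | h
    · exact keylt t t' ht ht' h he
    · exact keylt t' t ht' ht (by omega) he.symm
  have hbadcard : bad.card ≤ big.card :=
    Finset.card_le_card_of_injOn _ (fun t ht => (key t ht).1) hinj
  obtain ⟨t, htr, htg⟩ : ∃ t ∈ Finset.range (ω + 1), Nat.Coprime (a₀ + 11 * M' * t) n := by
    by_contra hcon
    push_neg at hcon
    have hsub : Finset.range (ω + 1) ⊆ bad := by
      intro t ht
      exact Finset.mem_filter.mpr ⟨ht, hcon t ht⟩
    have := Finset.card_le_card hsub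
    rw [Finset.card_range] at this
    omega
  -- size bound
  have hMbound : 32 * (11 * (M' * (ω + 1))) + 11 ≤ n := by
    rcases le_or_gt ω 10 with hω10 | hω10
    · have hsub : small ⊆ ({2, 3, 5, 7} : Finset ℕ) := by
        intro p hp
        have hpp := hsmallP p hp
        have hple : p ≤ ω + 1 := (Finset.mem_filter.mp hp).2
        have h2 := hpp.two_le
        have hne := hne11 p hp
        have hp11 : p ≤ 11 := by omega
        interval_cases p <;> revert hpp hne <;> decide
      have hdvd210 : M' ∣ 210 := by
        have := Finset.prod_dvd_prod_of_subset small ({2, 3, 5, 7} : Finset ℕ) id hsub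
        simpa [hM'] using this
      have hM210 : M' ≤ 210 := Nat.le_of_dvd (by norm_num) hdvd210
      have : M' * (ω + 1) ≤ 210 * 11 := Nat.mul_le_mul hM210 (by omega)
      omega
    · have hs2 : 2 * small.card ≤ ω + 2 := by
        have hmap : ∀ p ∈ small, (p + 1) / 2 ∈ Finset.Icc 1 ((ω + 2) / 2) := by
          intro p hp
          have h2 := (hsmallP p hp).two_le
          have hple : p ≤ ω + 1 := (Finset.mem_filter.mp hp).2
          refine Finset.mem_Icc.mpr ⟨by omega, Nat.div_le_div_right (by omega)⟩
        have hinj2 : Set.InjOn (fun p => (p + 1) / 2) ↑small := by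
          intro p hp q hq h
          simp only [Finset.mem_coe] at hp hq
          have h1 := (hsmallP p hp).eq_two_or_odd
          have h2 := (hsmallP q hq).eq_two_or_odd
          have h1' := (hsmallP p hp).two_le
          have h2' := (hsmallP q hq).two_le
          have h' : (p + 1) / 2 = (q + 1) / 2 := h
          rcases h1 with h1 | h1 <;> rcases h2 with h2 | h2 <;> omega
        have := Finset.card_le_card_of_injOn _ hmap hinj2
        rw [Nat.card_Icc] at this
        omega
      set k := big.card with hk
      have hk5 : 5 ≤ k := by omega
      have hbigprod : (ω + 2) ^ k ≤ ∏ p ∈ big, p := by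
        refine Finset.pow_card_le_prod big _ _ (fun p hp => ?_)
        have := (Finset.mem_filter.mp hp).2
        omega
      have hprodn : M' * ∏ p ∈ big, p = ∏ p ∈ n.primeFactors, p := by
        rw [hM', hsmall, hbig]
        exact Finset.prod_filter_mul_prod_filter_not _ _ _
      have hn' : M' * (ω + 2) ^ k ≤ n := by
        calc M' * (ω + 2) ^ k ≤ M' * ∏ p ∈ big, p := Nat.mul_le_mul_left _ hbigprod
          _ = ∏ p ∈ n.primeFactors, p := hprodn
          _ ≤ n := Nat.le_of_dvd (by omega) (Nat.prod_primeFactors_dvd n)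
      have hpow : 363 * (ω + 2) ≤ (ω + 2) ^ k := by
        calc 363 * (ω + 2) ≤ (ω + 2) ^ 4 * (ω + 2) := by
              have : (363 : ℕ) ≤ (ω + 2) ^ 4 := by
                calc (363 : ℕ) ≤ 13 ^ 4 := by norm_num
                  _ ≤ (ω + 2) ^ 4 := Nat.pow_le_pow_left (by omega) 4
              exact Nat.mul_le_mul_right _ this
          _ = (ω + 2) ^ 5 := by ring
          _ ≤ (ω + 2) ^ k := Nat.pow_le_pow_right (by omega) hk5
      have hfin : M' * (363 * (ω + 2)) ≤ n :=
        le_trans (Nat.mul_le_mul_left _ hpow) hn'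
      nlinarith [hM'pos, Nat.zero_le ω]
  -- conclude
  have htle : t ≤ ω := by
    have := Finset.mem_range.mp htr
    omega
  have hXle : M' * t ≤ M' * ω := Nat.mul_le_mul_left _ htle
  have hMsum : M' * (ω + 1) = M' * ω + M' := by ring
  have hgroup : 11 * M' * t = 11 * (M' * t) := by ring
  refine ⟨a₀ + 11 * M' * t, by omega, by omega, ?_, htg⟩
  have hmodfin : (a₀ + 11 * M' * t) % 11 = a₀ % 11 := by
    have : a₀ + 11 * M' * t = a₀ + 11 * (M' * t) := by ring
    rw [this, Nat.add_mul_mod_self_left]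
  omega


theorem stmt_4 : (Aᶜ : Set ℕ).Finite := by
  apply Set.Finite.subset (Set.finite_Iio 1000000)
  intro n hn
  simp only [Set.mem_compl_iff] at hn
  by_contra hlt
  simp only [Set.mem_Iio, not_lt] at hlt
  apply hn
  by_cases h11 : 11 ∣ n
  · exact mem_A_of_dvd11 n (by omega) h11
  · obtain ⟨a, ha1, ha2, ha3, ha4⟩ := sieve n hlt h11
    exact mem_A_of n a ha1 ha2 ha3 ha4
end

section
/- For every k ≥ 3 and every natural number q ≥ 1 with gcd(11, q) = 1, the number 11^k · q belongs to A = {10a + 11b : a ≥ 1, b ≥ 2a+1, gcd(a,b) = 1}. -/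
theorem stmt_7 (k q : ℕ) (hk : 3 ≤ k) (hq : 1 ≤ q) (h : Nat.gcd 11 q = 1) :
    11 ^ k * q ∈ A := by
  obtain ⟨m, rfl⟩ := Nat.exists_eq_add_of_le hk
  set t : ℕ := 11 ^ (2 + m) * q with ht
  have ht121 : 121 ≤ t := by
    calc 121 = 121 * 1 := by ring
    _ ≤ 11 ^ (2 + m) * q := by
        apply Nat.mul_le_mul _ hq
        calc (121 : ℕ) = 11 ^ 2 := by norm_num
        _ ≤ 11 ^ (2 + m) := Nat.pow_le_pow_right (by norm_num) (by omega)
  refine ⟨11, t - 10, ?_, by norm_num, by omega, ?_⟩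
  · have : 11 ^ (3 + m) * q = 11 * t := by rw [ht]; ring
    omega
  · have hp : Nat.Prime 11 := by norm_num
    have : Nat.Coprime 11 (t - 10) := by
      rw [Nat.Prime.coprime_iff_not_dvd hp]
      intro hdvd
      have hd : 11 ∣ t := Dvd.dvd.mul_right (dvd_pow_self 11 (by omega)) q
      have h10 : (11 : ℕ) ∣ 10 := by
        have := Nat.dvd_sub hd hdvd
        have he : t - (t - 10) = 10 := by omega
        rwa [he] at this
      omega
    exact this
end

section
/- For every natural number q ≥ 3 with gcd(11, q) = 1, the number 121·q belongs to A, while 121 and 242 do not belong to A, where A = {10a + 11b : a ≥ 1, b ≥ 2a+1, gcd(a,b) = 1}. -/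
theorem stmt_8 : (∀ q : ℕ, 3 ≤ q → Nat.gcd 11 q = 1 → 121 * q ∈ A) ∧
    121 ∉ A ∧ 242 ∉ A := by
  refine ⟨?_, ?_, ?_⟩
  · intro q hq _
    refine ⟨11, 11 * q - 10, by omega, by omega, by omega, ?_⟩
    have h : 11 * q - 10 = 1 + (q - 1) * 11 := by omega
    rw [h, Nat.gcd_add_mul_right_right 11 1 (q-1), Nat.gcd_one_right]
  · rintro ⟨a, b, h1, h2, h3, h4⟩; omega
  · rintro ⟨a, b, h1, h2, h3, h4⟩; omega
end

section
/- For every natural number q ≥ 33 with q ∉ {43, 54, 76, 120}, the number 11q belongs to A = {10a + 11b : a ≥ 1, b ≥ 2a+1, gcd(a,b) = 1}. -/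
lemma memA (a b n : ℕ) (h : n = 10 * a + 11 * b) (h1 : 1 ≤ a) (h2 : 2 * a + 1 ≤ b)
    (h3 : Nat.gcd a b = 1) : n ∈ A := ⟨a, b, h, h1, h2, h3⟩

theorem stmt_9 (q : ℕ) (hq : 33 ≤ q) (h : q ∉ ({43, 54, 76, 120} : Set ℕ)) :
    11 * q ∈ A := by
  simp only [Set.mem_insert_iff, Set.mem_singleton_iff, not_or] at h
  obtain ⟨h43, h54, h76, h120⟩ := h
  by_cases h11 : q % 11 = 10
  · by_cases hbig : 353 ≤ q
    · -- a = 121, b = q - 110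
      have hb : ¬ (11 ∣ (q - 110)) := by omega
      have hc : Nat.Coprime 11 (q - 110) :=
        (Nat.Prime.coprime_iff_not_dvd (by norm_num)).2 hb
      have hc2 : Nat.Coprime 121 (q - 110) := by
        have := Nat.Coprime.pow_left 2 hc
        simpa using this
      exact memA 121 (q - 110) _ (by omega) (by norm_num) (by omega) hc2
    · -- small cases: q = 11*t + 10, 3 ≤ t ≤ 31
      obtain ⟨t, rfl⟩ : ∃ t, q = 11 * t + 10 := ⟨q / 11, by omega⟩
      have ht1 : 3 ≤ t := by omega
      have ht2 : t ≤ 31 := by omega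
      interval_cases t <;> first
        | omega
        | exact memA 22 45 _ rfl (by norm_num) (by norm_num) (by norm_num)
        | exact memA 22 67 _ rfl (by norm_num) (by norm_num) (by norm_num)
        | exact memA 33 68 _ rfl (by norm_num) (by norm_num) (by norm_num)
        | exact memA 22 89 _ rfl (by norm_num) (by norm_num) (by norm_num)
        | exact memA 22 111 _ rfl (by norm_num) (by norm_num) (by norm_num)
        | exact memA 33 112 _ rfl (by norm_num) (by norm_num) (by norm_num)
        | exact memA 22 133 _ rfl (by norm_num) (by norm_num) (by norm_num)
        | exact memA 33 134 _ rfl (by norm_num) (by norm_num) (by norm_num)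
        | exact memA 22 155 _ rfl (by norm_num) (by norm_num) (by norm_num)
        | exact memA 55 136 _ rfl (by norm_num) (by norm_num) (by norm_num)
        | exact memA 22 177 _ rfl (by norm_num) (by norm_num) (by norm_num)
        | exact memA 33 178 _ rfl (by norm_num) (by norm_num) (by norm_num)
        | exact memA 22 199 _ rfl (by norm_num) (by norm_num) (by norm_num)
        | exact memA 33 200 _ rfl (by norm_num) (by norm_num) (by norm_num)
        | exact memA 22 221 _ rfl (by norm_num) (by norm_num) (by norm_num)
        | exact memA 55 202 _ rfl (by norm_num) (by norm_num) (by norm_num)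
        | exact memA 22 243 _ rfl (by norm_num) (by norm_num) (by norm_num)
        | exact memA 33 244 _ rfl (by norm_num) (by norm_num) (by norm_num)
        | exact memA 22 265 _ rfl (by norm_num) (by norm_num) (by norm_num)
        | exact memA 33 266 _ rfl (by norm_num) (by norm_num) (by norm_num)
        | exact memA 22 287 _ rfl (by norm_num) (by norm_num) (by norm_num)
        | exact memA 55 268 _ rfl (by norm_num) (by norm_num) (by norm_num)
        | exact memA 22 309 _ rfl (by norm_num) (by norm_num) (by norm_num)
        | exact memA 33 310 _ rfl (by norm_num) (by norm_num) (by norm_num)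
        | exact memA 22 331 _ rfl (by norm_num) (by norm_num) (by norm_num)
  · -- a = 11, b = q - 10
    have hb : ¬ (11 ∣ (q - 10)) := by omega
    have hc : Nat.Coprime 11 (q - 10) :=
      (Nat.Prime.coprime_iff_not_dvd (by norm_num)).2 hb
    exact memA 11 (q - 10) _ (by omega) (by norm_num) (by omega) hc
end

section
/- 1320 is the largest multiple of 11 that does not belong to A: 1320 ∉ A, and every multiple of 11 greater than 1320 belongs to A, where A = {10a + 11b : a ≥ 1, b ≥ 2a+1, gcd(a,b) = 1}. -/
lemma prime_cop {p b : ℕ} (hp : p.Prime) (h : ¬ p ∣ b) : Nat.Coprime p b :=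
  (Nat.Prime.coprime_iff_not_dvd hp).2 h

theorem stmt_11 : 1320 ∉ A ∧ ∀ n : ℕ, 11 ∣ n → 1320 < n → n ∈ A := by
  constructor
  · rintro ⟨a, b, heq, ha, hb, hg⟩
    have h11 : a % 11 = 0 := by omega
    have : (a = 11 ∧ b = 110) ∨ (a = 22 ∧ b = 100) ∨ (a = 33 ∧ b = 90) := by omega
    rcases this with ⟨rfl, rfl⟩ | ⟨rfl, rfl⟩ | ⟨rfl, rfl⟩ <;> simp_all
  · intro n hdvd hgt
    obtain ⟨m, rfl⟩ := hdvd
    have hm : 121 ≤ m := by omega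
    have p2 : Nat.Prime 2 := by norm_num
    have p3 : Nat.Prime 3 := by norm_num
    have p5 : Nat.Prime 5 := by norm_num
    have p11 : Nat.Prime 11 := by norm_num
    by_cases h10 : m % 11 = 10
    · by_cases hbig : 353 ≤ m
      · -- a = 121, b = m - 110
        refine ⟨121, m - 110, by omega, by norm_num, by omega, ?_⟩
        have h11b : ¬ (11 ∣ (m - 110)) := by omega
        have : Nat.Coprime (11 * 11) (m - 110) :=
          Nat.Coprime.mul (prime_cop p11 h11b) (prime_cop p11 h11b)
        simpa using this
      · -- 121 ≤ m ≤ 352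
        by_cases h2 : m % 2 = 1
        · -- a = 22, b = m - 20
          refine ⟨22, m - 20, by omega, by norm_num, by omega, ?_⟩
          have : Nat.Coprime (2 * 11) (m - 20) :=
            Nat.Coprime.mul (prime_cop p2 (by omega)) (prime_cop p11 (by omega))
          simpa using this
        · by_cases h3 : m % 3 = 0
          · by_cases h5 : m % 5 = 0
            · exfalso; omega
            · -- a = 55, b = m - 50 ; m ≥ 186 since 6 ∣ m, m ≡ 10 [11], m ≥ 121
              have hm' : 186 ≤ m := by omega
              refine ⟨55, m - 50, by omega, by norm_num, by omega, ?_⟩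
              have : Nat.Coprime (5 * 11) (m - 50) :=
                Nat.Coprime.mul (prime_cop p5 (by omega)) (prime_cop p11 (by omega))
              simpa using this
          · -- a = 33, b = m - 30
            refine ⟨33, m - 30, by omega, by norm_num, by omega, ?_⟩
            have : Nat.Coprime (3 * 11) (m - 30) :=
              Nat.Coprime.mul (prime_cop p3 (by omega)) (prime_cop p11 (by omega))
            simpa using this
    · -- a = 11, b = m - 10
      refine ⟨11, m - 10, by omega, by norm_num, by omega, ?_⟩
      exact prime_cop p11 (by omega)
end

section
/- Let p ≥ 43 be a prime with p = 10a + 11b, gcd(a,b) = 1, a ≥ 1, b ≥ 2a+1. Then for every k ≥ 2 and every q ≥ 1 with gcd(p, q) = 1, the number p^k · q belongs to A = {10a' + 11b' : a' ≥ 1, b' ≥ 2a'+1, gcd(a',b') = 1}. -/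
theorem stmt_13 (p a b : ℕ) (hp : p.Prime) (hp43 : 43 ≤ p)
    (hdec : p = 10 * a + 11 * b) (ha : 1 ≤ a) (hb : 2 * a + 1 ≤ b)
    (hgcd : Nat.gcd a b = 1) :
    ∀ k q : ℕ, 2 ≤ k → 1 ≤ q → Nat.gcd p q = 1 → p ^ k * q ∈ A := by
  intro k q hk hq hpq
  set M : ℕ := p ^ (k - 1) * q with hM
  have hpM : p ∣ M := Dvd.dvd.mul_right (dvd_pow_self p (by omega : k - 1 ≠ 0)) q
  have hM43 : 43 ≤ M := by
    have h1 : p ≤ p ^ (k - 1) := Nat.le_self_pow (by omega) p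
    calc 43 ≤ p := hp43
      _ ≤ p ^ (k - 1) := h1
      _ = p ^ (k - 1) * 1 := (mul_one _).symm
      _ ≤ p ^ (k - 1) * q := Nat.mul_le_mul_left _ hq
  have hn : p ^ k * q = p * M := by
    have hk' : p ^ k = p * p ^ (k - 1) := by
      conv_lhs => rw [show k = 1 + (k - 1) by omega]
      rw [pow_add, pow_one]
    rw [hM, hk', mul_assoc]
  have hbM : 43 ≤ b * M := by
    have : 1 * 43 ≤ b * M := Nat.mul_le_mul (by omega) hM43
    omega
  refine ⟨a * M + 11, b * M - 10, ?_, by omega, ?_, ?_⟩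
  · -- sum equation
    have h1 : p * M = 10 * (a * M) + 11 * (b * M) := by rw [hdec]; ring
    omega
  · -- size condition
    have h2 : (2 * a + 1) * M ≤ b * M := Nat.mul_le_mul_right M hb
    have h3 : (2 * a + 1) * M = 2 * (a * M) + M := by ring
    omega
  · -- coprimality
    set a' := a * M + 11 with ha'
    set b' := b * M - 10 with hb'
    set g := Nat.gcd a' b' with hg
    have hga : g ∣ a' := Nat.gcd_dvd_left _ _
    have hgb : g ∣ b' := Nat.gcd_dvd_right _ _
    have hbM' : (b' : ℤ) + 10 = (b : ℤ) * M := by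
      have := Nat.sub_add_cancel (by omega : 10 ≤ b * M)
      exact_mod_cast congrArg (Nat.cast (R := ℤ)) this
    have key : (b : ℤ) * a' - (a : ℤ) * b' = p := by
      rw [hdec, ha']
      push_cast
      linear_combination -(a : ℤ) * hbM'
    have hgp : (g : ℤ) ∣ (p : ℤ) := by
      rw [← key]
      exact dvd_sub (Dvd.dvd.mul_left (Int.natCast_dvd_natCast.mpr hga) _)
        (Dvd.dvd.mul_left (Int.natCast_dvd_natCast.mpr hgb) _)
    have hgp' : g ∣ p := Int.natCast_dvd_natCast.mp hgp
    rcases (Nat.Prime.eq_one_or_self_of_dvd hp g hgp') with h1 | h1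
    · exact h1
    · exfalso
      have hpa' : p ∣ a' := h1 ▸ hga
      have hp11 : p ∣ 11 :=
        (Nat.dvd_add_right (Dvd.dvd.mul_left hpM a)).mp hpa'
      have := Nat.le_of_dvd (by norm_num) hp11
      omega
end

section
/- Let p ≥ 43 be a prime with p = 10a + 11b, gcd(a,b) = 1, a ≥ 1, b ≥ 2a+1. Then for every q ≥ 33 with gcd(p, q) = 1, the number p·q belongs to A = {10a' + 11b' : a' ≥ 1, b' ≥ 2a'+1, gcd(a',b') = 1}. -/
theorem stmt_14 (p a b : ℕ) (hp : p.Prime) (hp43 : 43 ≤ p)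
    (hdec : p = 10 * a + 11 * b) (ha : 1 ≤ a) (hb : 2 * a + 1 ≤ b)
    (hgcd : Nat.gcd a b = 1) :
    ∀ q : ℕ, 33 ≤ q → Nat.gcd p q = 1 → p * q ∈ A := by
  intro q hq hpq
  have h1 : (2*a+1)*q ≤ b*q := Nat.mul_le_mul hb le_rfl
  have h2 : 1*33 ≤ a*q := Nat.mul_le_mul ha hq
  have hXY : 2*(a*q) + 33 ≤ b*q := by nlinarith
  have hX : 33 ≤ a*q := by linarith
  have hN : p*q = 10*(a*q) + 11*(b*q) := by rw [hdec]; ring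
  obtain ⟨X, Y, hXd, hYd⟩ : ∃ X Y : ℕ, a*q = X ∧ b*q = Y := ⟨_, _, rfl, rfl⟩
  rw [hXd, hYd] at hXY hN
  rw [hXd] at hX
  have hXz : (a:ℤ)*q = (X:ℤ) := by exact_mod_cast congrArg (Nat.cast : ℕ → ℤ) hXd
  have hYz : (b:ℤ)*q = (Y:ℤ) := by exact_mod_cast congrArg (Nat.cast : ℕ → ℤ) hYd
  have hpz : (p:ℤ) = 10*a + 11*b := by exact_mod_cast hdec
  by_cases hcase : p ∣ X + 11
  · -- use a' = X - 11, b' = Y + 10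
    refine ⟨X - 11, Y + 10, by rw [hN]; omega, by omega, by omega, ?_⟩
    set d := Nat.gcd (X - 11) (Y + 10) with hd
    have hd1 : d ∣ X - 11 := Nat.gcd_dvd_left _ _
    have hd2 : d ∣ Y + 10 := Nat.gcd_dvd_right _ _
    have hd1' : (d:ℤ) ∣ (X:ℤ) - 11 := by
      have h := Int.natCast_dvd_natCast.mpr hd1
      rwa [show ((X-11:ℕ):ℤ) = (X:ℤ)-11 by omega] at h
    have hd2' : (d:ℤ) ∣ (Y:ℤ) + 10 := by
      have h := Int.natCast_dvd_natCast.mpr hd2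
      push_cast at h; exact h
    have key : (p:ℤ) = a * ((Y:ℤ)+10) - b * ((X:ℤ)-11) := by
      rw [← hXz, ← hYz, hpz]; ring
    have hdvd : d ∣ p := by
      have : (d:ℤ) ∣ (p:ℤ) := by
        rw [key]
        exact dvd_sub (hd2'.mul_left a) (hd1'.mul_left b)
      exact_mod_cast this
    rcases (Nat.Prime.eq_one_or_self_of_dvd hp d hdvd) with h | h
    · exact h
    · exfalso
      have hpX : p ∣ X - 11 := h ▸ hd1
      have h22 : p ∣ (X + 11) - (X - 11) := Nat.dvd_sub hcase hpX
      rw [show (X + 11) - (X - 11) = 22 by omega] at h22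
      have := Nat.le_of_dvd (by norm_num) h22
      omega
  · -- use a' = X + 11, b' = Y - 10
    refine ⟨X + 11, Y - 10, by rw [hN]; omega, by omega, by omega, ?_⟩
    set d := Nat.gcd (X + 11) (Y - 10) with hd
    have hd1 : d ∣ X + 11 := Nat.gcd_dvd_left _ _
    have hd2 : d ∣ Y - 10 := Nat.gcd_dvd_right _ _
    have hd1' : (d:ℤ) ∣ (X:ℤ) + 11 := by
      have h := Int.natCast_dvd_natCast.mpr hd1
      push_cast at h; exact h
    have hd2' : (d:ℤ) ∣ (Y:ℤ) - 10 := by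
      have h := Int.natCast_dvd_natCast.mpr hd2
      rwa [show ((Y-10:ℕ):ℤ) = (Y:ℤ)-10 by omega] at h
    have key : (p:ℤ) = b * ((X:ℤ)+11) - a * ((Y:ℤ)-10) := by
      rw [← hXz, ← hYz, hpz]; ring
    have hdvd : d ∣ p := by
      have : (d:ℤ) ∣ (p:ℤ) := by
        rw [key]
        exact dvd_sub (hd1'.mul_left b) (hd2'.mul_left a)
      exact_mod_cast this
    rcases (Nat.Prime.eq_one_or_self_of_dvd hp d hdvd) with h | h
    · exact h
    · exact absurd (h ▸ hd1) hcase
end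

section
/- Every natural number n ≡ 10 (mod 11) with n ≥ 43 belongs to A = {10a + 11b : a ≥ 1, b ≥ 2a+1, gcd(a,b) = 1}, and the only elements of {10 + 11k : k ≥ 0} not in A are 10, 21, 32. -/
lemma mem_A_ge (n : ℕ) (h : n ∈ A) : 43 ≤ n := by
  obtain ⟨a, b, h1, h2, h3, _⟩ := h
  omega

lemma big_mem_A (n : ℕ) (h1 : n % 11 = 10) (h2 : 43 ≤ n) : n ∈ A := by
  refine ⟨1, (n - 10) / 11, by omega, le_refl _, by omega, Nat.gcd_one_left _⟩

theorem stmt_15 : (∀ n : ℕ, n % 11 = 10 → 43 ≤ n → n ∈ A) ∧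
    (∀ n : ℕ, (∃ k : ℕ, n = 10 + 11 * k) → (n ∉ A ↔ n = 10 ∨ n = 21 ∨ n = 32)) := by
  constructor
  · exact big_mem_A
  · rintro n ⟨k, rfl⟩
    constructor
    · intro hn
      by_contra h
      exact hn (big_mem_A _ (by omega) (by omega))
    · intro h hA
      have := mem_A_ge _ hA
      omega
end

section
/- The number 1560 does not belong to A = {10a + 11b : a ≥ 1, b ≥ 2a+1, gcd(a,b) = 1}, and 1560 is the largest element of C₂ = {20 + 11k : k ≥ 0} not in A. -/
/-- class function: the residue class of t mod p such that p ∣ 2 + 11*t -/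
noncomputable def eclass (p : ℕ) : ℕ := (((-2 : ZMod p)) * (11 : ZMod p)⁻¹).val

lemma class_of_dvd {p t : ℕ} (hp : p.Prime) (hp11 : p ≠ 11) (h : p ∣ (2 + 11 * t)) :
    t % p = eclass p % p := by
  haveI := Fact.mk hp
  have h11 : (11 : ZMod p) ≠ 0 := by
    intro h0
    have := (ZMod.natCast_eq_zero_iff 11 p).mp h0
    exact hp11 ((Nat.prime_dvd_prime_iff_eq hp (by norm_num)).mp this)
  have hc : ((2 + 11 * t : ℕ) : ZMod p) = 0 := (ZMod.natCast_eq_zero_iff _ p).mpr h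
  push_cast at hc
  have ht : (t : ZMod p) = (-2 : ZMod p) * (11 : ZMod p)⁻¹ := by
    rw [eq_mul_inv_iff_mul_eq₀ h11]
    linear_combination hc
  have : (t : ZMod p) = ((eclass p : ℕ) : ZMod p) := by
    rw [ht, eclass, ZMod.natCast_val, ZMod.cast_id]
  have := (ZMod.natCast_eq_natCast_iff _ _ _).mp this
  exact this

/-- shifted class through an invertible multiplier -/
lemma invshift (p q c ep : ℕ) :
    ∃ E, p.Prime → ¬ p ∣ q → ∀ s, ((c + q * s) % p = ep % p ↔ s % p = E % p) := by
  by_cases hp : p.Prime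
  · by_cases hq : p ∣ q
    · exact ⟨0, fun _ h => absurd hq h⟩
    · haveI := Fact.mk hp
      have hq0 : (q : ZMod p) ≠ 0 := fun h0 => hq ((ZMod.natCast_eq_zero_iff q p).mp h0)
      refine ⟨((((ep : ZMod p) - c)) * (q : ZMod p)⁻¹).val, fun _ _ s => ?_⟩
      have key : ((c + q * s : ℕ) : ZMod p) = (ep : ℕ) ↔
          (s : ZMod p) = ((ep : ZMod p) - c) * (q : ZMod p)⁻¹ := by
        push_cast
        rw [eq_mul_inv_iff_mul_eq₀ hq0]
        constructor
        · intro h; linear_combination h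
        · intro h; linear_combination h
      constructor
      · intro h
        have h1 : ((c + q * s : ℕ) : ZMod p) = (ep : ℕ) :=
          (ZMod.natCast_eq_natCast_iff _ _ _).mpr h
        have h2 := key.mp h1
        have h3 : (s : ZMod p) = ((((ep : ZMod p) - c) * (q : ZMod p)⁻¹).val : ℕ) := by
          rw [h2, ZMod.natCast_val, ZMod.cast_id]
        exact (ZMod.natCast_eq_natCast_iff _ _ _).mp h3
      · intro h
        have h3 : (s : ZMod p) = ((((ep : ZMod p) - c) * (q : ZMod p)⁻¹).val : ℕ) :=
          (ZMod.natCast_eq_natCast_iff _ _ _).mpr h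
        rw [ZMod.natCast_val, ZMod.cast_id] at h3
        exact (ZMod.natCast_eq_natCast_iff _ _ _).mp (key.mpr h3)
  · exact ⟨0, fun h => absurd h hp⟩

lemma block_base : ∀ (a : Fin 2) (b : Fin 3) (c : Fin 5),
    ((Finset.range 30).filter
      (fun j => j % 2 ≠ a.val ∧ j % 3 ≠ b.val ∧ j % 5 ≠ c.val)).card = 8 := by decide

lemma block_card (E2 E3 E5 x : ℕ) :
    ((Finset.Ico x (x+30)).filter
      (fun t => t % 2 ≠ E2 % 2 ∧ t % 3 ≠ E3 % 3 ∧ t % 5 ≠ E5 % 5)).card = 8 := by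
  obtain ⟨F2, h2⟩ := invshift 2 1 x E2
  obtain ⟨F3, h3⟩ := invshift 3 1 x E3
  obtain ⟨F5, h5⟩ := invshift 5 1 x E5
  have s2 := h2 Nat.prime_two (by decide)
  have s3 := h3 Nat.prime_three (by decide)
  have s5 := h5 (by norm_num) (by decide)
  have key : ((Finset.Ico x (x+30)).filter
      (fun t => t % 2 ≠ E2 % 2 ∧ t % 3 ≠ E3 % 3 ∧ t % 5 ≠ E5 % 5)).card =
      ((Finset.range 30).filter
      (fun j => j % 2 ≠ F2 % 2 ∧ j % 3 ≠ F3 % 3 ∧ j % 5 ≠ F5 % 5)).card := by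
    apply Finset.card_bij' (fun t _ => t - x) (fun j _ => x + j)
    · intro t ht
      simp only [Finset.mem_filter, Finset.mem_Ico] at ht
      simp only [Finset.mem_filter, Finset.mem_range]
      obtain ⟨⟨hx1, hx2⟩, c2, c3, c5⟩ := ht
      have hxt : x + 1 * (t - x) = t := by omega
      refine ⟨by omega, ?_, ?_, ?_⟩
      · intro hc; exact c2 (by rw [← hxt]; exact ((s2 (t-x)).mpr hc))
      · intro hc; exact c3 (by rw [← hxt]; exact ((s3 (t-x)).mpr hc))
      · intro hc; exact c5 (by rw [← hxt]; exact ((s5 (t-x)).mpr hc))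
    · intro j hj
      simp only [Finset.mem_filter, Finset.mem_range] at hj
      simp only [Finset.mem_filter, Finset.mem_Ico]
      obtain ⟨hj30, c2, c3, c5⟩ := hj
      have hxj : x + 1 * j = x + j := by ring
      refine ⟨by omega, ?_, ?_, ?_⟩
      · intro hc; exact c2 ((s2 j).mp (by rw [hxj]; exact hc))
      · intro hc; exact c3 ((s3 j).mp (by rw [hxj]; exact hc))
      · intro hc; exact c5 ((s5 j).mp (by rw [hxj]; exact hc))
    · intro t ht; simp only [Finset.mem_filter, Finset.mem_Ico] at ht; omega
    · intro j hj; simp only [Finset.mem_filter, Finset.mem_range] at hj; omega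
  rw [key]
  exact block_base ⟨F2 % 2, Nat.mod_lt _ (by norm_num)⟩ ⟨F3 % 3, Nat.mod_lt _ (by norm_num)⟩
    ⟨F5 % 5, Nat.mod_lt _ (by norm_num)⟩

lemma window_card (E2 E3 E5 : ℕ) : ∀ (K x : ℕ),
    ((Finset.Ico x (x+30*K)).filter
      (fun t => t % 2 ≠ E2 % 2 ∧ t % 3 ≠ E3 % 3 ∧ t % 5 ≠ E5 % 5)).card = 8*K := by
  intro K
  induction K with
  | zero => intro x; simp
  | succ K ih =>
    intro x
    have hsplit : Finset.Ico x (x+30*(K+1)) =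
        Finset.Ico x (x+30) ∪ Finset.Ico (x+30) ((x+30)+30*K) := by
      rw [Finset.Ico_union_Ico_eq_Ico (by omega) (by omega)]
      congr 1; ring
    rw [hsplit, Finset.filter_union, Finset.card_union_of_disjoint, block_card, ih (x+30)]
    · ring
    · exact Finset.disjoint_filter_filter (Finset.Ico_disjoint_Ico_consecutive _ _ _)

lemma not_dvd_of_small {p q : ℕ} (hq : q.Prime) (hp : p.Prime) (h : p < q) : ¬ p ∣ q :=
  fun hd => absurd ((Nat.prime_dvd_prime_iff_eq hp hq).mp hd) (by omega)

lemma Bq_card (E2 E3 E5 cq x L q : ℕ) (hq : Nat.Prime q) (h7 : 7 ≤ q) (hL : L ≤ 30*q) :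
    ((Finset.Ico x (x+L)).filter
      (fun t => (t % 2 ≠ E2 % 2 ∧ t % 3 ≠ E3 % 3 ∧ t % 5 ≠ E5 % 5) ∧ t % q = cq % q)).card ≤ 8 := by
  set c := cq % q with hc
  set B := (Finset.Ico x (x+L)).filter
      (fun t => (t % 2 ≠ E2 % 2 ∧ t % 3 ≠ E3 % 3 ∧ t % 5 ≠ E5 % 5) ∧ t % q = c) with hB
  rcases B.eq_empty_or_nonempty with hE | hNE
  · rw [hE]; simp
  obtain ⟨F2, h2⟩ := invshift 2 q c E2
  obtain ⟨F3, h3⟩ := invshift 3 q c E3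
  obtain ⟨F5, h5⟩ := invshift 5 q c E5
  have s2 := h2 Nat.prime_two (not_dvd_of_small hq Nat.prime_two (by omega))
  have s3 := h3 Nat.prime_three (not_dvd_of_small hq Nat.prime_three (by omega))
  have s5 := h5 (by norm_num) (not_dvd_of_small hq (by norm_num) (by omega))
  set t₀ := B.min' hNE with ht₀
  have ht₀B : t₀ ∈ B := B.min'_mem hNE
  set s₀ := t₀ / q with hs₀
  have hcard := block_card F2 F3 F5 s₀
  calc B.card ≤ ((Finset.Ico s₀ (s₀+30)).filter
      (fun s => s % 2 ≠ F2 % 2 ∧ s % 3 ≠ F3 % 3 ∧ s % 5 ≠ F5 % 5)).card := by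
        apply Finset.card_le_card_of_injOn (fun t => t / q)
        · intro t ht
          have htB := ht
          simp only [hB, Finset.mem_coe, Finset.mem_filter, Finset.mem_Ico] at ht
          obtain ⟨⟨hx1, hx2⟩, ⟨c2, c3, c5⟩, hmod⟩ := ht
          simp only [hB, Finset.mem_filter, Finset.mem_Ico] at ht₀B
          obtain ⟨⟨hx1', hx2'⟩, _, hmod'⟩ := ht₀B
          have et : q * (t / q) + c = t := by rw [← hmod]; exact Nat.div_add_mod t q
          have et' : q * s₀ + c = t₀ := by rw [hs₀, ← hmod']; exact Nat.div_add_mod t₀ q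
          have hle : t₀ ≤ t := B.min'_le t htB
          have hlow : s₀ ≤ t / q := by
            rw [hs₀]; exact Nat.div_le_div_right hle
          have hhigh : t / q < s₀ + 30 := by
            by_contra hcon
            push_neg at hcon
            have : q * (s₀ + 30) ≤ q * (t / q) := Nat.mul_le_mul_left q hcon
            have : q * s₀ + 30 * q ≤ q * (t / q) := by nlinarith
            omega
          simp only [Finset.mem_coe, Finset.mem_filter, Finset.mem_Ico]
          have hct : c + q * (t / q) = t := by omega
          refine ⟨⟨hlow, hhigh⟩, ?_, ?_, ?_⟩
          · intro hcon; exact c2 (by rw [← hct]; exact (s2 (t/q)).mpr hcon)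
          · intro hcon; exact c3 (by rw [← hct]; exact (s3 (t/q)).mpr hcon)
          · intro hcon; exact c5 (by rw [← hct]; exact (s5 (t/q)).mpr hcon)
        · intro a ha b hb hab
          simp only [hB, Finset.coe_filter, Set.mem_setOf_eq, Finset.mem_Ico] at ha hb
          have ea : q * (a / q) + c = a := by rw [← ha.2.2]; exact Nat.div_add_mod a q
          have eb : q * (b / q) + c = b := by rw [← hb.2.2]; exact Nat.div_add_mod b q
          simp only at hab
          rw [hab] at ea
          omega
    _ = 8 := hcard


section prodmin

lemma pp_step (M : Finset ℕ) (hNE : M.Nonempty) (mbd lo : ℕ)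
    (hmax : mbd ≤ M.max' hNE) (hlo : lo ≤ (M.erase (M.max' hNE)).prod id) :
    lo * mbd ≤ M.prod id := by
  rw [← Finset.prod_erase_mul M id (M.max'_mem hNE)]
  exact Nat.mul_le_mul hlo hmax

lemma max_ge (M : Finset ℕ) (hM : ∀ q ∈ M, Nat.Prime q ∧ 7 ≤ q ∧ q ≠ 11) (hNE : M.Nonempty)
    (S : Finset ℕ) (bd : ℕ)
    (hS : ∀ z, Nat.Prime z → 7 ≤ z → z ≠ 11 → z ≤ bd → z ∈ S)
    (hcard : S.card < M.card) : bd + 1 ≤ M.max' hNE := by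
  by_contra hcon
  push_neg at hcon
  have hsub : M ⊆ S := by
    intro z hz
    obtain ⟨hp, h7, h11⟩ := hM z hz
    exact hS z hp h7 h11 (le_trans (M.le_max' z hz) (by omega))
  exact absurd (Finset.card_le_card hsub) (by omega)

lemma pp1 (M : Finset ℕ) (hM : ∀ q ∈ M, Nat.Prime q ∧ 7 ≤ q ∧ q ≠ 11)
    (h : M.card = 1) : 7 ≤ M.prod id := by
  obtain ⟨a, ha⟩ := Finset.card_eq_one.mp h
  subst ha
  rw [Finset.prod_singleton]
  exact (hM a (Finset.mem_singleton_self a)).2.1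

lemma ppgen (M : Finset ℕ) (hM : ∀ q ∈ M, Nat.Prime q ∧ 7 ≤ q ∧ q ≠ 11)
    (r : ℕ) (h : M.card = r + 1) (S : Finset ℕ) (bd lo : ℕ)
    (hS : ∀ z, Nat.Prime z → 7 ≤ z → z ≠ 11 → z ≤ bd → z ∈ S)
    (hScard : S.card = r)
    (hrec : ∀ M' : Finset ℕ, (∀ q ∈ M', Nat.Prime q ∧ 7 ≤ q ∧ q ≠ 11) → M'.card = r →
      lo ≤ M'.prod id) :
    lo * (bd + 1) ≤ M.prod id := by
  have hNE : M.Nonempty := Finset.card_pos.mp (by omega)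
  apply pp_step M hNE
  · exact max_ge M hM hNE S bd hS (by omega)
  · exact hrec _ (fun q hq => hM q (Finset.mem_of_mem_erase hq))
      (by rw [Finset.card_erase_of_mem (M.max'_mem hNE)]; omega)

lemma pp2 (M : Finset ℕ) (hM : ∀ q ∈ M, Nat.Prime q ∧ 7 ≤ q ∧ q ≠ 11)
    (h : M.card = 2) : 91 ≤ M.prod id := by
  have := ppgen M hM 1 h {7} 12 7
    (by intro z h1 h2 h3 h4; interval_cases z <;>
      first | decide | (exact absurd h1 (by decide)) | (exact absurd rfl h3))
    (by decide) pp1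
  omega

lemma pp3 (M : Finset ℕ) (hM : ∀ q ∈ M, Nat.Prime q ∧ 7 ≤ q ∧ q ≠ 11)
    (h : M.card = 3) : 1547 ≤ M.prod id := by
  have := ppgen M hM 2 h {7,13} 16 91
    (by intro z h1 h2 h3 h4; interval_cases z <;>
      first | decide | (exact absurd h1 (by decide)) | (exact absurd rfl h3))
    (by decide) pp2
  omega

lemma pp4 (M : Finset ℕ) (hM : ∀ q ∈ M, Nat.Prime q ∧ 7 ≤ q ∧ q ≠ 11)
    (h : M.card = 4) : 29393 ≤ M.prod id := by
  have := ppgen M hM 3 h {7,13,17} 18 1547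
    (by intro z h1 h2 h3 h4; interval_cases z <;>
      first | decide | (exact absurd h1 (by decide)) | (exact absurd rfl h3))
    (by decide) pp3
  omega

lemma pp5 (M : Finset ℕ) (hM : ∀ q ∈ M, Nat.Prime q ∧ 7 ≤ q ∧ q ≠ 11)
    (h : M.card = 5) : 676039 ≤ M.prod id := by
  have := ppgen M hM 4 h {7,13,17,19} 22 29393
    (by intro z h1 h2 h3 h4; interval_cases z <;>
      first | decide | (exact absurd h1 (by decide)) | (exact absurd rfl h3))
    (by decide) pp4
  omega

lemma pp6 (M : Finset ℕ) (hM : ∀ q ∈ M, Nat.Prime q ∧ 7 ≤ q ∧ q ≠ 11)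
    (h : M.card = 6) : 19605131 ≤ M.prod id := by
  have := ppgen M hM 5 h {7,13,17,19,23} 28 676039
    (by intro z h1 h2 h3 h4; interval_cases z <;>
      first | decide | (exact absurd h1 (by decide)) | (exact absurd rfl h3))
    (by decide) pp5
  omega

lemma pp6ge (M : Finset ℕ) (hM : ∀ q ∈ M, Nat.Prime q ∧ 7 ≤ q ∧ q ≠ 11)
    (h : 6 ≤ M.card) : 19605131 ≤ M.prod id := by
  obtain ⟨T, hTsub, hTcard⟩ := Finset.exists_subset_card_eq h
  calc (19605131 : ℕ) ≤ T.prod id := pp6 T (fun q hq => hM q (hTsub hq)) hTcard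
    _ ≤ M.prod id := Finset.prod_le_prod_of_subset_of_one_le' hTsub
        (fun i hi _ => le_trans (by norm_num) (hM i hi).2.1)

end prodmin

theorem rec_lemma : ∀ (N : ℕ) (M : Finset ℕ), M.card ≤ N →
    (∀ q ∈ M, Nat.Prime q ∧ 7 ≤ q ∧ q ≠ 11) → ∀ (e : ℕ → ℕ) (x : ℕ),
    ∃ t, x ≤ t ∧ 352 * (t - x) + 740 ≤ max 42628 (2 * M.prod id) ∧
      (t % 2 ≠ e 2 % 2 ∧ t % 3 ≠ e 3 % 3 ∧ t % 5 ≠ e 5 % 5) ∧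
      (∀ q ∈ M, t % q ≠ e q % q) := by
  intro N
  induction N with
  | zero =>
    intro M hcard hM e x
    have hMempty : M = ∅ := Finset.card_eq_zero.mp (by omega)
    subst hMempty
    -- counting with K = 1
    have hw := window_card (e 2) (e 3) (e 5) 1 x
    have hpos : 0 < ((Finset.Ico x (x+30*1)).filter
        (fun t => t % 2 ≠ e 2 % 2 ∧ t % 3 ≠ e 3 % 3 ∧ t % 5 ≠ e 5 % 5)).card := by omega
    obtain ⟨t, ht⟩ := Finset.card_pos.mp hpos
    simp only [Finset.mem_filter, Finset.mem_Ico] at ht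
    exact ⟨t, ht.1.1, by omega, ht.2, by simp⟩
  | succ N ih =>
    intro M hcard hM e x
    by_cases hsmall : M.card ≤ 6
    · -- counting case
      set r := M.card with hr
      set K := r + 1 with hK
      have hex : ∃ t, t ∈ Finset.Ico x (x+30*K) ∧
          (t % 2 ≠ e 2 % 2 ∧ t % 3 ≠ e 3 % 3 ∧ t % 5 ≠ e 5 % 5) ∧
          (∀ q ∈ M, t % q ≠ e q % q) := by
        by_contra hcon
        push_neg at hcon
        set F := (Finset.Ico x (x+30*K)).filter
          (fun t => t % 2 ≠ e 2 % 2 ∧ t % 3 ≠ e 3 % 3 ∧ t % 5 ≠ e 5 % 5) with hF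
        have hwin : F.card = 8*K := by rw [hF]; exact window_card (e 2) (e 3) (e 5) K x
        have hsub : F ⊆ M.biUnion (fun q => (Finset.Ico x (x+30*K)).filter
            (fun t => (t % 2 ≠ e 2 % 2 ∧ t % 3 ≠ e 3 % 3 ∧ t % 5 ≠ e 5 % 5) ∧
              t % q = e q % q)) := by
          intro t ht
          simp only [hF, Finset.mem_filter] at ht
          obtain ⟨q, hqM, hqe⟩ := hcon t ht.1 ht.2
          rw [Finset.mem_biUnion]
          exact ⟨q, hqM, by simp only [Finset.mem_filter]; exact ⟨ht.1, ht.2, hqe⟩⟩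
        have hcard2 : F.card ≤ 8 * M.card := by
          calc F.card ≤ _ := Finset.card_le_card hsub
            _ ≤ ∑ q ∈ M, ((Finset.Ico x (x+30*K)).filter
                (fun t => (t % 2 ≠ e 2 % 2 ∧ t % 3 ≠ e 3 % 3 ∧ t % 5 ≠ e 5 % 5) ∧
                  t % q = e q % q)).card := Finset.card_biUnion_le
            _ ≤ ∑ _q ∈ M, 8 := by
                apply Finset.sum_le_sum
                intro q hq
                obtain ⟨hqp, hq7, _⟩ := hM q hq
                exact Bq_card (e 2) (e 3) (e 5) (e q) x (30*K) q hqp hq7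
                  (Nat.mul_le_mul_left 30 (by omega))
            _ = 8 * M.card := by rw [Finset.sum_const, smul_eq_mul, mul_comm]
        omega
      obtain ⟨t, htI, hbase, hMc⟩ := hex
      rw [Finset.mem_Ico] at htI
      refine ⟨t, htI.1, ?_, hbase, hMc⟩
      have hb1 : 352 * (t - x) + 740 ≤ 10560 * K + 388 := by omega
      have : 10560 * K + 388 ≤ max 42628 (2 * M.prod id) := by
        rcases (by omega : r ≤ 3 ∨ r = 4 ∨ r = 5 ∨ r = 6) with h | h | h | h
        · exact le_trans (by omega) (le_max_left _ _)
        · have h4 := pp4 M hM h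
          exact le_trans (by omega : 10560 * K + 388 ≤ 2 * M.prod id) (le_max_right _ _)
        · have h5 := pp5 M hM h
          exact le_trans (by omega : 10560 * K + 388 ≤ 2 * M.prod id) (le_max_right _ _)
        · have h6 := pp6 M hM h
          exact le_trans (by omega : 10560 * K + 388 ≤ 2 * M.prod id) (le_max_right _ _)
      omega
    · -- peel case
      push_neg at hsmall
      have hNE : M.Nonempty := Finset.card_pos.mp (by omega)
      set q := M.max' hNE with hq
      have hqM : q ∈ M := M.max'_mem hNE
      obtain ⟨hqp, hq7, hq11⟩ := hM q hqM
      set M' := M.erase q with hM'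
      have hM'card : M'.card = M.card - 1 := Finset.card_erase_of_mem hqM
      have hM'hyp : ∀ p ∈ M', Nat.Prime p ∧ 7 ≤ p ∧ p ≠ 11 :=
        fun p hp => hM p (Finset.mem_of_mem_erase hp)
      have hq13 : 13 ≤ q := by
        by_contra hcon
        push_neg at hcon
        have hsub : M ⊆ {7} := by
          intro z hz
          obtain ⟨h1, h2, h3⟩ := hM z hz
          have hle : z ≤ 12 := le_trans (M.le_max' z hz) (by omega)
          interval_cases z <;>
            first | decide | (exact absurd h1 (by decide)) | (exact absurd rfl h3)
        have := Finset.card_le_card hsub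
        simp at this
        omega
      set c := if e q % q = 0 then 1 else 0 with hc
      have hcq : c < q := by rw [hc]; split <;> omega
      have hcne : c ≠ e q % q := by rw [hc]; split <;> omega
      -- shifted classes
      have espec : ∀ p, ∃ E, p.Prime → ¬ p ∣ q →
          ∀ s, ((c + q * s) % p = e p % p ↔ s % p = E % p) := fun p => invshift p q c (e p)
      set e' : ℕ → ℕ := fun p => Classical.choose (espec p) with he'
      have he'spec : ∀ p, p.Prime → ¬ p ∣ q →
          ∀ s, ((c + q * s) % p = e p % p ↔ s % p = e' p % p) :=
        fun p => Classical.choose_spec (espec p)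
      obtain ⟨s, hs1, hs2, hsbase, hsM⟩ := ih M' (by omega) hM'hyp e' (x / q + 1)
      refine ⟨c + q * s, ?_, ?_, ?_, ?_⟩
      · -- x ≤ t
        have := Nat.div_add_mod x q
        have hxm : x % q < q := Nat.mod_lt x (by omega)
        have : q * (x / q + 1) ≤ q * s := Nat.mul_le_mul_left q hs1
        nlinarith [Nat.div_add_mod x q]
      · -- bound
        have hprod' : 19605131 ≤ M'.prod id := pp6ge M' hM'hyp (by omega)
        have hmax' : max 42628 (2 * M'.prod id) = 2 * M'.prod id := by
          rw [max_eq_right]; omega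
        rw [hmax'] at hs2
        have hprodM : M.prod id = M'.prod id * q := by
          rw [hM', hq]
          exact (Finset.prod_erase_mul M id hqM).symm
        -- t - x ≤ q*(s - (x/q+1)) + 2q - 1
        have hxq : q * (x / q) + x % q = x := Nat.div_add_mod x q
        have hxm : x % q < q := Nat.mod_lt x (by omega)
        have hsplit : q * s = q * (x / q + 1) + q * (s - (x / q + 1)) := by
          rw [← Nat.mul_add]
          congr 1
          omega
        have hbd : c + q * s - x ≤ q * (s - (x / q + 1)) + 2 * q - 1 := by
          have h1 : q * (x / q + 1) = q * (x / q) + q := by ring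
          omega
        have hD := hs2
        -- 352 * (c + q*s - x) + 740 ≤ q * (352 * (s - (x/q+1)) + 740)
        have key : 352 * (c + q * s - x) + 740 ≤ q * (352 * (s - (x / q + 1)) + 740) := by
          have h13 : 13 ≤ q := hq13
          have expand : q * (352 * (s - (x / q + 1)) + 740) =
              352 * (q * (s - (x / q + 1))) + 740 * q := by ring
          omega
        calc 352 * (c + q * s - x) + 740 ≤ q * (352 * (s - (x / q + 1)) + 740) := key
          _ ≤ q * (2 * M'.prod id) := Nat.mul_le_mul_left q hD
          _ = 2 * M.prod id := by rw [hprodM]; ring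
          _ ≤ max 42628 (2 * M.prod id) := le_max_right _ _
      · -- base conditions
        refine ⟨?_, ?_, ?_⟩
        · intro hcon
          exact hsbase.1 ((he'spec 2 Nat.prime_two
            (not_dvd_of_small hqp Nat.prime_two (by omega)) s).mp hcon)
        · intro hcon
          exact hsbase.2.1 ((he'spec 3 Nat.prime_three
            (not_dvd_of_small hqp Nat.prime_three (by omega)) s).mp hcon)
        · intro hcon
          exact hsbase.2.2 ((he'spec 5 (by norm_num)
            (not_dvd_of_small hqp (by norm_num) (by omega)) s).mp hcon)
      · -- M conditions
        intro p hpM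
        by_cases hpq : p = q
        · subst hpq
          rw [Nat.add_mul_mod_self_left, Nat.mod_eq_of_lt hcq]
          exact hcne
        · have hpM' : p ∈ M' := Finset.mem_erase.mpr ⟨hpq, hpM⟩
          obtain ⟨hpp, hp7, _⟩ := hM'hyp p hpM'
          intro hcon
          have hnd : ¬ p ∣ q := fun hd =>
            hpq ((Nat.prime_dvd_prime_iff_eq hpp hqp).mp hd)
          exact hsM p hpM' ((he'spec p hpp hnd s).mp hcon)

lemma mk_mem (k t : ℕ) (h32 : 32*t + 5 ≤ k) (hg : Nat.gcd (2+11*t) (20+11*k) = 1) :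
    (20+11*k) ∈ A := by
  refine ⟨2+11*t, k-10*t, by omega, by omega, by omega, ?_⟩
  have h1 : Nat.gcd (2+11*t) (k-10*t) ∣ (2+11*t) := Nat.gcd_dvd_left _ _
  have h2 : Nat.gcd (2+11*t) (k-10*t) ∣ (k-10*t) := Nat.gcd_dvd_right _ _
  have h3 : Nat.gcd (2+11*t) (k-10*t) ∣ (20+11*k) := by
    have : 10*(2+11*t) + 11*(k-10*t) = 20+11*k := by omega
    rw [← this]
    exact Nat.dvd_add (h1.mul_left 10) (h2.mul_left 11)
  have h4 : Nat.gcd (2+11*t) (k-10*t) ∣ Nat.gcd (2+11*t) (20+11*k) :=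
    Nat.dvd_gcd h1 h3
  rw [hg] at h4
  exact Nat.dvd_one.mp h4

set_option maxRecDepth 10000 in
lemma fin_check : ∀ k : ℕ, 141 ≤ k → k < 3813 →
    ∃ t, 32*t + 5 ≤ k ∧ Nat.gcd (2+11*t) (20+11*k) = 1 := by
  have H : ((List.range 3813).all (fun k => decide (k < 141) ||
      (List.range 8).any (fun t => decide (32*t + 5 ≤ k) &&
        decide (Nat.gcd (2+11*t) (20+11*k) = 1)))) = true := by decide
  intro k h1 h2
  have hk := List.all_eq_true.mp H k (List.mem_range.mpr h2)
  simp only [Bool.or_eq_true, decide_eq_true_eq, List.any_eq_true, List.mem_range,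
    Bool.and_eq_true] at hk
  rcases hk with h | ⟨t, _, hta, htb⟩
  · omega
  · exact ⟨t, hta, htb⟩

lemma big_case (k : ℕ) (hk : 3813 ≤ k) (he : k % 2 = 0) :
    ∃ t, 32*t + 5 ≤ k ∧ Nat.gcd (2+11*t) (20+11*k) = 1 := by
  set n := 20 + 11*k with hn
  have hn0 : n ≠ 0 := by omega
  set M := n.primeFactors.filter (fun q => 7 ≤ q ∧ q ≠ 11) with hMdef
  have hM : ∀ q ∈ M, Nat.Prime q ∧ 7 ≤ q ∧ q ≠ 11 := by
    intro q hq
    rw [hMdef, Finset.mem_filter] at hq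
    exact ⟨Nat.prime_of_mem_primeFactors hq.1, hq.2⟩
  obtain ⟨t, -, hbound, hbase, hMc⟩ := rec_lemma M.card M le_rfl hM eclass 0
  simp only [Nat.sub_zero] at hbound
  -- 2 * prod ∣ n
  have hPdvd : M.prod id ∣ n := by
    calc M.prod id ∣ n.primeFactors.prod id :=
          Finset.prod_dvd_prod_of_subset _ _ id (Finset.filter_subset _ _)
      _ ∣ n := Nat.prod_primeFactors_dvd n
  have hodd : ¬ 2 ∣ M.prod id := by
    refine Finset.prod_induction id (fun x => ¬ 2 ∣ x) ?_ (by decide) ?_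
    · intro a b ha hb hab
      rcases (Nat.Prime.dvd_mul Nat.prime_two).mp hab with h | h
      exacts [ha h, hb h]
    · intro q hq hdvd
      obtain ⟨hqp, hq7, -⟩ := hM q hq
      have := (Nat.prime_dvd_prime_iff_eq Nat.prime_two hqp).mp hdvd
      omega
  have h2n : 2 ∣ n := by omega
  have h2P : 2 * M.prod id ∣ n :=
    Nat.Coprime.mul_dvd_of_dvd_of_dvd
      ((Nat.Prime.coprime_iff_not_dvd Nat.prime_two).mpr hodd) h2n hPdvd
  have hle : 352 * t + 75 ≤ n := by
    rcases max_cases 42628 (2 * M.prod id) with ⟨hm, -⟩ | ⟨hm, -⟩ <;> rw [hm] at hbound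
    · omega
    · have := Nat.le_of_dvd (by omega) h2P
      omega
  refine ⟨t, by omega, ?_⟩
  by_contra hg
  obtain ⟨p, hp, hpa, hpn⟩ := Nat.Prime.not_coprime_iff_dvd.mp hg
  have hp11 : p ≠ 11 := by rintro rfl; omega
  have hcl := class_of_dvd hp hp11 hpa
  rcases lt_or_ge p 7 with h7 | h7
  · have h2 := hp.two_le
    interval_cases p
    · exact hbase.1 hcl
    · exact hbase.2.1 hcl
    · exact absurd hp (by decide)
    · exact hbase.2.2 hcl
    · exact absurd hp (by decide)
  · have hpM : p ∈ M := by
      rw [hMdef, Finset.mem_filter]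
      exact ⟨Nat.mem_primeFactors.mpr ⟨hp, hpn, hn0⟩, h7, hp11⟩
    exact hMc p hpM hcl

theorem stmt_16 : 1560 ∉ A ∧
    ∀ n : ℕ, (∃ k : ℕ, n = 20 + 11 * k) → 1560 < n → n ∈ A := by
  constructor
  · rintro ⟨a, b, hab, ha1, hb, hg⟩
    have ha48 : a ≤ 48 := by omega
    interval_cases a <;> try omega
    · have hbv : b = 140 := by omega
      subst hbv; exact absurd hg (by decide)
    · have hbv : b = 130 := by omega
      subst hbv; exact absurd hg (by decide)
    · have hbv : b = 120 := by omega
      subst hbv; exact absurd hg (by decide)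
    · have hbv : b = 110 := by omega
      subst hbv; exact absurd hg (by decide)
    · have hbv : b = 100 := by omega
      subst hbv; exact absurd hg (by decide)
  · rintro n ⟨k, rfl⟩ hgt
    have hk : 141 ≤ k := by omega
    rcases Nat.even_or_odd k with he | ho
    · have he2 : k % 2 = 0 := Nat.even_iff.mp he
      rcases lt_or_ge k 3813 with hlt | hge
      · obtain ⟨t, h1, h2⟩ := fin_check k hk hlt
        exact mk_mem k t h1 h2
      · obtain ⟨t, h1, h2⟩ := big_case k hge he2
        exact mk_mem k t h1 h2
    · have ho2 : k % 2 = 1 := Nat.odd_iff.mp ho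
      refine mk_mem k 0 (by omega) ?_
      rw [Nat.gcd_rec]
      have h1 : (20 + 11*k) % (2 + 11*0) = 1 := by omega
      rw [h1]
      decide
end

section
/- If p is a prime in A with decomposition p = 10a + 11b (gcd(a,b) = 1, a ≥ 1, b ≥ 2a+1), p ≥ 43, and q ≥ 1 satisfies gcd(p,q) = 1, a·q ≥ 12 and (b − 2a)·q ≥ 33, then p·q belongs to A. -/
theorem stmt_19 (p a b q : ℕ) (hp : p.Prime) (hp43 : 43 ≤ p)
    (hdec : p = 10 * a + 11 * b) (ha : 1 ≤ a) (hb : 2 * a + 1 ≤ b)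
    (hgcd : Nat.gcd a b = 1) (hq : 1 ≤ q) (hpq : Nat.gcd p q = 1)
    (h1 : 12 ≤ a * q) (h2 : 33 ≤ (b - 2 * a) * q) : p * q ∈ A := by
  -- b*q ≥ 2*(a*q) + 33
  have keyb : b * q = (b - 2*a) * q + 2 * (a*q) := by
    have hb' : b - 2*a + 2*a = b := by omega
    calc b * q = (b - 2*a + 2*a) * q := by rw [hb']
    _ = (b - 2*a) * q + 2 * (a*q) := by ring
  have hbq : 2 * (a*q) + 33 ≤ b * q := by linarith
  obtain ⟨m, hm⟩ : ∃ m, a * q = m + 11 := ⟨a*q - 11, by omega⟩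
  obtain ⟨n, hn⟩ : ∃ n, b * q = n + 10 := ⟨b*q - 10, by omega⟩
  have hm1 : 1 ≤ m := by linarith
  have hn1 : 2*m + 45 ≤ n := by linarith
  have hm' : (a:ℤ) * q = (m:ℤ) + 11 := by exact_mod_cast hm
  have hn' : (b:ℤ) * q = (n:ℤ) + 10 := by exact_mod_cast hn
  have hd' : (p:ℤ) = 10*(a:ℤ) + 11*(b:ℤ) := by exact_mod_cast hdec
  by_cases hc : p ∣ m
  · -- use witnesses (m + 22, n)
    refine ⟨m + 22, n, ?_, by omega, by omega, ?_⟩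
    · have : (p:ℤ) * q = 10*((m:ℤ)+22) + 11*(n:ℤ) := by
        linear_combination (q:ℤ) * hd' + 10 * hm' + 11 * hn'
      exact_mod_cast this
    · set d := Nat.gcd (m+22) n with hdd
      have d1 : d ∣ m + 22 := Nat.gcd_dvd_left _ _
      have d2 : d ∣ n := Nat.gcd_dvd_right _ _
      have key : b * (m+22) = a * n + p := by
        have : (b:ℤ) * ((m:ℤ)+22) = (a:ℤ) * n + p := by
          linear_combination (a:ℤ) * hn' - (b:ℤ) * hm' - hd'
        exact_mod_cast this
      have hsub : b * (m+22) - a * n = p := by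
        rw [key, Nat.add_sub_cancel_left]
      have hdp : d ∣ p := hsub ▸ Nat.dvd_sub (d1.mul_left b) (d2.mul_left a)
      rcases (Nat.Prime.eq_one_or_self_of_dvd hp d hdp) with h | h
      · exact h
      · exfalso
        have : p ∣ 22 := (Nat.dvd_add_right hc).mp (h ▸ d1)
        have := Nat.le_of_dvd (by norm_num) this
        omega
  · -- use witnesses (m, n + 20)
    refine ⟨m, n + 20, ?_, by omega, by omega, ?_⟩
    · have : (p:ℤ) * q = 10*(m:ℤ) + 11*((n:ℤ)+20) := by
        linear_combination (q:ℤ) * hd' + 10 * hm' + 11 * hn'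
      exact_mod_cast this
    · set d := Nat.gcd m (n+20) with hdd
      have d1 : d ∣ m := Nat.gcd_dvd_left _ _
      have d2 : d ∣ n + 20 := Nat.gcd_dvd_right _ _
      have key : a * (n+20) = b * m + p := by
        have : (a:ℤ) * ((n:ℤ)+20) = (b:ℤ) * m + p := by
          linear_combination (b:ℤ) * hm' - (a:ℤ) * hn' - hd'
        exact_mod_cast this
      have hsub : a * (n+20) - b * m = p := by
        rw [key, Nat.add_sub_cancel_left]
      have hdp : d ∣ p := hsub ▸ Nat.dvd_sub (d2.mul_left a) (d1.mul_left b)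
      rcases (Nat.Prime.eq_one_or_self_of_dvd hp d hdp) with h | h
      · exact h
      · exact absurd (h ▸ d1) hc
end
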